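/- arXiv:2003.11270 — 2 statements merged into one kernel-verified Lean document; each statement's English description precedes it below -/
import Mathlib

section
/- Let G be a graph with Gallai–Edmonds decomposition (D₁, …, D_r; A; C), where D₁, …, D_r are the connected components of the induced subgraph on D(G). Then Σ_{i=1}^r (|D_i| - 1) + 2|A| + |C| = 2ν(G); equivalently, r = |A| + |V| - 2ν(G). -/
attribute [local instance] Classical.propDecidable
set_option linter.unusedSectionVars false
set_option linter.unusedVariables false
set_option maxHeartbeats 1000000

variable {V : Type} [Fintype V] [DecidableEq V]

/-- A matching in a simple graph `G`: a finite set of edges of `G`, pairwise vertex-disjoint. -/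
def IsGMatching (G : SimpleGraph V) (M : Finset (Sym2 V)) : Prop :=
  (∀ e ∈ M, e ∈ G.edgeSet) ∧ ∀ e ∈ M, ∀ f ∈ M, e ≠ f → ∀ v, v ∈ e → v ∉ f

/-- The matching number `ν(G)` of a simple graph. -/
noncomputable def gnu (G : SimpleGraph V) : ℕ :=
  ((Finset.univ : Finset (Sym2 V)).powerset.filter fun M => IsGMatching G M).sup Finset.card

/-- The graph `G - v`: delete the vertex `v` (i.e. all edges incident to it). -/
def delV (G : SimpleGraph V) (v : V) : SimpleGraph V where
  Adj x y := G.Adj x y ∧ x ≠ v ∧ y ≠ v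
  symm := ⟨fun _ _ ⟨h, hx, hy⟩ => ⟨h.symm, hy, hx⟩⟩
  loopless := ⟨fun x h => G.loopless.irrefl x h.1⟩

/-- The Gallai–Edmonds set `D(G) = {v : ν(G - v) = ν(G)}`. -/
def Dset (G : SimpleGraph V) : Set V := {v | gnu (delV G v) = gnu G}

/-- The Gallai–Edmonds set `A(G) = N_G(D(G))`. -/
def Aset (G : SimpleGraph V) : Set V := {w | w ∉ Dset G ∧ ∃ d ∈ Dset G, G.Adj w d}

/-- The Gallai–Edmonds set `C(G) = V \ (D(G) ∪ A(G))`. -/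
def Cset (G : SimpleGraph V) : Set V := (Dset G ∪ Aset G)ᶜ

/-- Reachability inside the induced subgraph `G[S]` (same component of `G[S]`). -/
def reachOn (G : SimpleGraph V) (S : Set V) : V → V → Prop :=
  Relation.ReflTransGen fun a b => G.Adj a b ∧ a ∈ S ∧ b ∈ S

/-- vertices covered by an edge set -/
def fcov (Q : Finset (Sym2 V)) : Finset V := Finset.univ.filter (fun z => ∃ e ∈ Q, z ∈ e)

lemma mem_fcov {Q : Finset (Sym2 V)} {z : V} : z ∈ fcov Q ↔ ∃ e ∈ Q, z ∈ e := by
  simp [fcov]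

lemma fcov_mono {Q R : Finset (Sym2 V)} (h : Q ⊆ R) : fcov Q ⊆ fcov R := by
  intro z hz; rw [mem_fcov] at *; obtain ⟨e, he, hze⟩ := hz; exact ⟨e, h he, hze⟩

lemma fcov_union {Q R : Finset (Sym2 V)} : fcov (Q ∪ R) = fcov Q ∪ fcov R := by
  ext z; simp only [mem_fcov, Finset.mem_union]
  constructor
  · rintro ⟨e, he | he, hz⟩
    · exact Or.inl ⟨e, he, hz⟩
    · exact Or.inr ⟨e, he, hz⟩
  · rintro (⟨e, he, hz⟩ | ⟨e, he, hz⟩) <;> exact ⟨e, by simp [he], hz⟩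

lemma matching_subset {G : SimpleGraph V} {M M' : Finset (Sym2 V)}
    (h : IsGMatching G M) (hs : M' ⊆ M) : IsGMatching G M' :=
  ⟨fun e he => h.1 e (hs he), fun e he f hf hef v hv => h.2 e (hs he) f (hs hf) hef v hv⟩

lemma matching_empty (G : SimpleGraph V) : IsGMatching G ∅ := by
  constructor <;> simp

lemma le_gnu {G : SimpleGraph V} {M : Finset (Sym2 V)} (h : IsGMatching G M) :
    M.card ≤ gnu G := by
  apply Finset.le_sup (f := Finset.card)
  simp only [Finset.mem_filter, Finset.mem_powerset]
  exact ⟨Finset.subset_univ _, h⟩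

lemma gnu_spec (G : SimpleGraph V) : ∃ M, IsGMatching G M ∧ M.card = gnu G := by
  have hne : ((Finset.univ : Finset (Sym2 V)).powerset.filter fun M => IsGMatching G M).Nonempty := by
    refine ⟨∅, ?_⟩
    simp only [Finset.mem_filter, Finset.mem_powerset]
    exact ⟨Finset.empty_subset _, matching_empty G⟩
  obtain ⟨M, hM, hcard⟩ := Finset.exists_mem_eq_sup _ hne Finset.card
  simp only [Finset.mem_filter, Finset.mem_powerset] at hM
  exact ⟨M, hM.2, hcard.symm⟩

lemma edge_not_diag {G : SimpleGraph V} {e : Sym2 V} (he : e ∈ G.edgeSet) : ¬ e.IsDiag :=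
  G.not_isDiag_of_mem_edgeSet he

/-- vertices of a single non-diagonal edge : card 2 -/
lemma card_everts {e : Sym2 V} (he : ¬ e.IsDiag) :
    (Finset.univ.filter (· ∈ e)).card = 2 := by
  induction e with
  | h x y =>
    rw [Sym2.isDiag_iff_proj_eq] at he
    have : (Finset.univ.filter (· ∈ s(x, y))) = {x, y} := by
      ext z; simp [Sym2.mem_iff]
    rw [this, Finset.card_insert_of_notMem (by simpa using he), Finset.card_singleton]

lemma fcov_singleton {e : Sym2 V} : fcov {e} = Finset.univ.filter (· ∈ e) := by
  ext z; simp [mem_fcov]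

/-- the unique matching edge at a covered vertex -/
lemma matching_unique_edge {G : SimpleGraph V} {M : Finset (Sym2 V)} (hM : IsGMatching G M)
    {z : V} {e f : Sym2 V} (he : e ∈ M) (hf : f ∈ M) (hze : z ∈ e) (hzf : z ∈ f) : e = f := by
  by_contra hne
  exact hM.2 e he f hf hne z hze hzf

lemma card_fcov {G : SimpleGraph V} {M : Finset (Sym2 V)} :
    IsGMatching G M → (fcov M).card = 2 * M.card := by
  classical
  induction M using Finset.induction_on with
  | empty => intro _; simp [fcov]
  | @insert e M henm ih =>
    intro hMins
    have hM' : IsGMatching G M := matching_subset hMins (Finset.subset_insert _ _)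
    have hcov : fcov (insert e M) = (Finset.univ.filter (· ∈ e)) ∪ fcov M := by
      ext z
      simp only [mem_fcov, Finset.mem_union, Finset.mem_insert, Finset.mem_filter,
        Finset.mem_univ, true_and]
      constructor
      · rintro ⟨f, rfl | hf, hz⟩
        · exact Or.inl hz
        · exact Or.inr ⟨f, hf, hz⟩
      · rintro (hz | ⟨f, hf, hz⟩)
        · exact ⟨e, Or.inl rfl, hz⟩
        · exact ⟨f, Or.inr hf, hz⟩
    have hdisj : Disjoint (Finset.univ.filter (· ∈ e)) (fcov M) := by
      rw [Finset.disjoint_left]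
      intro z hz hz'
      simp only [Finset.mem_filter] at hz
      rw [mem_fcov] at hz'
      obtain ⟨f, hf, hzf⟩ := hz'
      have : e = f := matching_unique_edge hMins (Finset.mem_insert_self _ _)
        (Finset.mem_insert_of_mem hf) hz.2 hzf
      exact henm (this ▸ hf)
    rw [hcov, Finset.card_union_of_disjoint hdisj,
      card_everts (edge_not_diag (hMins.1 e (Finset.mem_insert_self _ _))),
      ih hM', Finset.card_insert_of_notMem henm]
    ring

lemma delV_adj {G : SimpleGraph V} {v x y : V} :
    (delV G v).Adj x y ↔ G.Adj x y ∧ x ≠ v ∧ y ≠ v := Iff.rfl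

lemma mem_edgeSet_delV {G : SimpleGraph V} {v : V} {e : Sym2 V} :
    e ∈ (delV G v).edgeSet ↔ e ∈ G.edgeSet ∧ v ∉ e := by
  induction e with
  | h x y =>
    simp only [SimpleGraph.mem_edgeSet, delV_adj, Sym2.mem_iff]
    constructor
    · rintro ⟨h, hx, hy⟩
      exact ⟨h, by rintro (rfl | rfl) <;> simp_all⟩
    · rintro ⟨h, hv⟩
      push_neg at hv
      exact ⟨h, Ne.symm hv.1, Ne.symm hv.2⟩

lemma matching_delV_iff {G : SimpleGraph V} {v : V} {M : Finset (Sym2 V)} :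
    IsGMatching (delV G v) M ↔ IsGMatching G M ∧ v ∉ fcov M := by
  constructor
  · intro h
    refine ⟨⟨fun e he => (mem_edgeSet_delV.1 (h.1 e he)).1, h.2⟩, ?_⟩
    rw [mem_fcov]
    rintro ⟨e, he, hv⟩
    exact (mem_edgeSet_delV.1 (h.1 e he)).2 hv
  · rintro ⟨h, hv⟩
    refine ⟨fun e he => mem_edgeSet_delV.2 ⟨h.1 e he, fun hve => ?_⟩, h.2⟩
    exact hv (mem_fcov.2 ⟨e, he, hve⟩)

lemma gnu_delV_le (G : SimpleGraph V) (v : V) : gnu (delV G v) ≤ gnu G := by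
  obtain ⟨M, hM, hc⟩ := gnu_spec (delV G v)
  rw [← hc]
  exact le_gnu (matching_delV_iff.1 hM).1

lemma gnu_le_gnu_delV_add_one (G : SimpleGraph V) (v : V) :
    gnu G ≤ gnu (delV G v) + 1 := by
  obtain ⟨M, hM, hc⟩ := gnu_spec G
  by_cases hv : v ∈ fcov M
  · rw [mem_fcov] at hv
    obtain ⟨e, he, hve⟩ := hv
    have : IsGMatching (delV G v) (M.erase e) := by
      rw [matching_delV_iff]
      refine ⟨matching_subset hM (Finset.erase_subset _ _), ?_⟩
      rw [mem_fcov]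
      rintro ⟨f, hf, hvf⟩
      have hfM := Finset.mem_of_mem_erase hf
      have := matching_unique_edge hM he hfM hve hvf
      exact (Finset.ne_of_mem_erase hf) this.symm
    calc gnu G = M.card := hc.symm
    _ ≤ (M.erase e).card + 1 := by
        rw [Finset.card_erase_of_mem he]; omega
    _ ≤ gnu (delV G v) + 1 := by
        have := le_gnu this; omega
  · have : IsGMatching (delV G v) M := matching_delV_iff.2 ⟨hM, hv⟩
    have := le_gnu this
    omega

lemma delV_comm (G : SimpleGraph V) (a b : V) :
    delV (delV G a) b = delV (delV G b) a := by
  ext x y; simp only [delV_adj]; tauto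

lemma delV_delV_self (G : SimpleGraph V) (a : V) : delV (delV G a) a = delV G a := by
  ext x y; simp only [delV_adj]; tauto

lemma mem_Dset_iff {G : SimpleGraph V} {v : V} :
    v ∈ Dset G ↔ ∃ M, IsGMatching G M ∧ M.card = gnu G ∧ v ∉ fcov M := by
  constructor
  · intro h
    obtain ⟨M, hM, hc⟩ := gnu_spec (delV G v)
    rw [matching_delV_iff] at hM
    exact ⟨M, hM.1, by rw [hc]; exact h, hM.2⟩
  · rintro ⟨M, hM, hc, hv⟩
    have h1 : gnu (delV G v) ≥ gnu G := by
      rw [← hc]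
      exact le_gnu (matching_delV_iff.2 ⟨hM, hv⟩)
    exact le_antisymm (gnu_delV_le G v) h1

lemma covered_of_not_mem_Dset {G : SimpleGraph V} {v : V} (hv : v ∉ Dset G)
    {M : Finset (Sym2 V)} (hM : IsGMatching G M) (hc : M.card = gnu G) : v ∈ fcov M := by
  by_contra h
  exact hv (mem_Dset_iff.2 ⟨M, hM, hc, h⟩)

def reachOn' (G : SimpleGraph V) (S : Set V) : V → V → Prop :=
  Relation.ReflTransGen fun a b => G.Adj a b ∧ a ∈ S ∧ b ∈ S

def chainN (R : V → V → Prop) : ℕ → V → V → Prop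
  | 0, x, y => x = y
  | n+1, x, y => ∃ z, R x z ∧ chainN R n z y

lemma chainN_snoc {R : V → V → Prop} : ∀ {n : ℕ} {x b c : V}, chainN R n x b → R b c → chainN R (n+1) x c := by
  intro n
  induction n with
  | zero => intro x b c h hR; cases h; exact ⟨c, hR, rfl⟩
  | succ n ih =>
    rintro x b c ⟨z, hz, hch⟩ hR
    exact ⟨z, hz, ih hch hR⟩

lemma reflTransGen_iff_chainN {R : V → V → Prop} {x y : V} :
    Relation.ReflTransGen R x y ↔ ∃ n, chainN R n x y := by
  constructor
  · intro h
    induction h with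
    | refl => exact ⟨0, rfl⟩
    | tail _ hR ih =>
      obtain ⟨n, hn⟩ := ih
      exact ⟨n + 1, chainN_snoc hn hR⟩
  · rintro ⟨n, hn⟩
    induction n generalizing x with
    | zero => cases hn; exact Relation.ReflTransGen.refl
    | succ n ih =>
      obtain ⟨z, hz, hch⟩ := hn
      exact Relation.ReflTransGen.head hz (ih hch)

lemma matching_insert {G : SimpleGraph V} {M : Finset (Sym2 V)} (hM : IsGMatching G M)
    {x y : V} (hadj : G.Adj x y) (hx : x ∉ fcov M) (hy : y ∉ fcov M) :
    IsGMatching G (insert s(x,y) M) ∧ (insert s(x,y) M).card = M.card + 1 := by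
  have hnotmem : s(x,y) ∉ M := fun h => hx (mem_fcov.2 ⟨_, h, by simp⟩)
  constructor
  · constructor
    · intro e he
      rcases Finset.mem_insert.1 he with rfl | he
      · exact hadj
      · exact hM.1 e he
    · intro e he f hf hef t ht htf
      rcases Finset.mem_insert.1 he with rfl | heM
      · rcases Finset.mem_insert.1 hf with rfl | hfM
        · exact hef rfl
        · rcases Sym2.mem_iff.1 ht with rfl | rfl
          · exact hx (mem_fcov.2 ⟨f, hfM, htf⟩)
          · exact hy (mem_fcov.2 ⟨f, hfM, htf⟩)
      · rcases Finset.mem_insert.1 hf with rfl | hfM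
        · rcases Sym2.mem_iff.1 htf with rfl | rfl
          · exact hx (mem_fcov.2 ⟨e, heM, ht⟩)
          · exact hy (mem_fcov.2 ⟨e, heM, ht⟩)
        · exact hM.2 e heM f hfM hef t ht htf
  · exact Finset.card_insert_of_notMem hnotmem

/-- A maximum matching has at most one exposed vertex in each connected piece of `D(G)`. -/
lemma key1 {G : SimpleGraph V} {M : Finset (Sym2 V)} (hM : IsGMatching G M)
    (hc : M.card = gnu G) {u v : V} (hu : u ∉ fcov M) (hv : v ∉ fcov M)
    (huv : u ≠ v) (hr : reachOn' G (Dset G) u v) : False := by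
  classical
  set step := fun a b => G.Adj a b ∧ a ∈ Dset G ∧ b ∈ Dset G with hstep
  set P : ℕ → Prop := fun n => ∃ N : Finset (Sym2 V), ∃ x y : V, IsGMatching G N ∧
    N.card = gnu G ∧ x ∉ fcov N ∧ y ∉ fcov N ∧ x ≠ y ∧ chainN step n x y with hP
  have hex : ∃ n, P n := by
    obtain ⟨n, hn⟩ := reflTransGen_iff_chainN.1 hr
    exact ⟨n, M, u, v, hM, hc, hu, hv, huv, hn⟩
  obtain ⟨n, hPn, hmin⟩ : ∃ n, P n ∧ ∀ m, m < n → ¬ P m :=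
    ⟨Nat.find hex, Nat.find_spec hex, fun m hm => Nat.find_min hex hm⟩
  obtain ⟨N, x, y, hN, hNc, hx, hy, hxy, hch⟩ := hPn
  obtain _ | ⟨_ | k⟩ := n
  · exact hxy hch
  · obtain ⟨w, hsw, hch'⟩ := hch
    have hwy : w = y := hch'
    subst hwy
    have h1 := matching_insert hN hsw.1 hx hy
    have := le_gnu h1.1
    rw [h1.2, hNc] at this
    omega
  · obtain ⟨w, hsw, hch'⟩ := hch
    have hadj : G.Adj x w := hsw.1
    have hwD : w ∈ Dset G := hsw.2.2
    have hwx : w ≠ x := hadj.ne'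
    by_cases hwy : w = y
    · subst hwy
      exact hmin 1 (by omega) ⟨N, x, w, hN, hNc, hx, hy, hxy, ⟨w, hsw, rfl⟩⟩
    by_cases hwcov : w ∈ fcov N
    swap
    · exact hmin 1 (by omega) ⟨N, x, w, hN, hNc, hx, hwcov, Ne.symm hwx, ⟨w, hsw, rfl⟩⟩
    -- main case : w is covered by N ; take N₂ missing w with max overlap
    have hTne : ((Finset.univ : Finset (Sym2 V)).powerset.filter fun K =>
        IsGMatching G K ∧ K.card = gnu G ∧ w ∉ fcov K).Nonempty := by
      obtain ⟨K, hK1, hK2, hK3⟩ := mem_Dset_iff.1 hwD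
      refine ⟨K, ?_⟩
      simp only [Finset.mem_filter, Finset.mem_powerset]
      exact ⟨Finset.subset_univ _, hK1, hK2, hK3⟩
    obtain ⟨N₂, hN₂T, hmax⟩ := Finset.exists_max_image _ (fun K => (K ∩ N).card) hTne
    simp only [Finset.mem_filter, Finset.mem_powerset] at hN₂T
    obtain ⟨-, hK, hKc, hKw⟩ := hN₂T
    by_cases hxN₂ : x ∈ fcov N₂
    swap
    · exact hmin 1 (by omega) ⟨N₂, x, w, hK, hKc, hxN₂, hKw, Ne.symm hwx, ⟨w, hsw, rfl⟩⟩
    by_cases hyN₂ : y ∈ fcov N₂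
    swap
    · exact hmin (k+1) (by omega) ⟨N₂, w, y, hK, hKc, hKw, hyN₂, hwy, hch'⟩
    -- counting : find z ≠ w covered by N, exposed by N₂
    have hcards : (fcov N₂).card = (fcov N).card := by
      rw [card_fcov hK, card_fcov hN, hKc, hNc]
    have hxy2 : {x, y} ⊆ fcov N₂ \ fcov N := by
      intro t ht
      rcases Finset.mem_insert.1 ht with rfl | ht
      · exact Finset.mem_sdiff.2 ⟨hxN₂, hx⟩
      · rw [Finset.mem_singleton] at ht; subst ht
        exact Finset.mem_sdiff.2 ⟨hyN₂, hy⟩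
    have h2le : 2 ≤ (fcov N \ fcov N₂).card := by
      rw [← Finset.card_sdiff_comm hcards]
      calc 2 = ({x, y} : Finset V).card := by rw [Finset.card_insert_of_notMem (by simpa using hxy), Finset.card_singleton]
      _ ≤ _ := Finset.card_le_card hxy2
    obtain ⟨z, hzmem, hzw⟩ := Finset.exists_mem_ne (s := fcov N \ fcov N₂) (by omega) w
    obtain ⟨hzN, hzN₂⟩ := Finset.mem_sdiff.1 hzmem
    obtain ⟨e, heN, hze⟩ := mem_fcov.1 hzN
    have heSet : e ∈ G.edgeSet := hN.1 e heN
    have hediag : ¬ e.IsDiag := edge_not_diag heSet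
    set z' := Sym2.Mem.other hze with hz'def
    have hspec : s(z, z') = e := Sym2.other_spec hze
    have hz'e : z' ∈ e := by rw [← hspec]; simp
    have hadj' : G.Adj z z' := by rw [← hspec] at heSet; exact heSet
    by_cases hz'N₂ : z' ∈ fcov N₂
    swap
    · have h1 := matching_insert hK hadj' hzN₂ hz'N₂
      have := le_gnu h1.1
      rw [h1.2, hKc] at this
      omega
    · obtain ⟨f, hfN₂, hz'f⟩ := mem_fcov.1 hz'N₂
      have hfe : f ≠ e := fun h => hzN₂ (mem_fcov.2 ⟨f, hfN₂, h ▸ hze⟩)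
      have heN₂ : e ∉ N₂ := fun h => hzN₂ (mem_fcov.2 ⟨e, h, hze⟩)
      have hfN : f ∉ N := fun h => hfe (matching_unique_edge hN h heN hz'f hz'e)
      set N₃ := insert e (N₂.erase f) with hN₃def
      have hN₃ : IsGMatching G N₃ := by
        constructor
        · intro g hg
          rcases Finset.mem_insert.1 hg with rfl | hg
          · exact heSet
          · exact hK.1 g (Finset.mem_of_mem_erase hg)
        · intro g hg g' hg' hne t ht ht'
          rcases Finset.mem_insert.1 hg with rfl | hgE
          · rcases Finset.mem_insert.1 hg' with rfl | hgE'
            · exact hne rfl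
            · have htzz : t = z ∨ t = z' := by rw [← hspec] at ht; exact Sym2.mem_iff.1 ht
              rcases htzz with rfl | rfl
              · exact hzN₂ (mem_fcov.2 ⟨g', Finset.mem_of_mem_erase hgE', ht'⟩)
              · have hgf : g' = f := matching_unique_edge hK (Finset.mem_of_mem_erase hgE') hfN₂ ht' hz'f
                exact Finset.ne_of_mem_erase hgE' hgf
          · rcases Finset.mem_insert.1 hg' with rfl | hgE'
            · have htzz : t = z ∨ t = z' := by rw [← hspec] at ht'; exact Sym2.mem_iff.1 ht'
              rcases htzz with rfl | rfl
              · exact hzN₂ (mem_fcov.2 ⟨g, Finset.mem_of_mem_erase hgE, ht⟩)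
              · have hgf : g = f := matching_unique_edge hK (Finset.mem_of_mem_erase hgE) hfN₂ ht hz'f
                exact Finset.ne_of_mem_erase hgE hgf
            · exact hK.2 g (Finset.mem_of_mem_erase hgE) g' (Finset.mem_of_mem_erase hgE') hne t ht ht'
      have hN₃c : N₃.card = gnu G := by
        have hpos : 0 < N₂.card := Finset.card_pos.2 ⟨f, hfN₂⟩
        rw [hN₃def, Finset.card_insert_of_notMem (fun h => heN₂ (Finset.mem_of_mem_erase h)),
          Finset.card_erase_of_mem hfN₂]
        omega
      have hwN₃ : w ∉ fcov N₃ := by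
        rw [mem_fcov]
        rintro ⟨g, hg, hwg⟩
        rcases Finset.mem_insert.1 hg with rfl | hg
        · rcases (by rw [← hspec] at hwg; exact Sym2.mem_iff.1 hwg : w = z ∨ w = z') with rfl | rfl
          · exact hzw rfl
          · exact hKw (mem_fcov.2 ⟨f, hfN₂, hz'f⟩)
        · exact hKw (mem_fcov.2 ⟨g, Finset.mem_of_mem_erase hg, hwg⟩)
      have hssub : N₂ ∩ N ⊂ N₃ ∩ N := by
        constructor
        · intro g hg
          obtain ⟨hg1, hg2⟩ := Finset.mem_inter.1 hg
          have hgf : g ≠ f := fun h => hfN (h ▸ hg2)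
          exact Finset.mem_inter.2 ⟨Finset.mem_insert_of_mem (Finset.mem_erase.2 ⟨hgf, hg1⟩), hg2⟩
        · intro hcon
          have : e ∈ N₂ ∩ N := hcon (Finset.mem_inter.2 ⟨Finset.mem_insert_self _ _, heN⟩)
          exact heN₂ (Finset.mem_inter.1 this).1
      have hle := hmax N₃ (by
        simp only [Finset.mem_filter, Finset.mem_powerset]
        exact ⟨Finset.subset_univ _, hN₃, hN₃c, hwN₃⟩)
      exact absurd (Finset.card_lt_card hssub) (not_lt.2 hle)

/-! ### components of an edge set -/

def estep (F : Finset (Sym2 V)) (e f : Sym2 V) : Prop :=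
  e ∈ F ∧ f ∈ F ∧ ∃ z : V, z ∈ e ∧ z ∈ f

def ereach (F : Finset (Sym2 V)) : Sym2 V → Sym2 V → Prop :=
  Relation.ReflTransGen (estep F)

lemma estep_symm {F : Finset (Sym2 V)} : Symmetric (estep F) := by
  rintro e f ⟨he, hf, z, hz1, hz2⟩; exact ⟨hf, he, z, hz2, hz1⟩

lemma ereach_symm {F : Finset (Sym2 V)} : Symmetric (ereach F) :=
  by haveI : Std.Symm (estep F) := ⟨estep_symm⟩; exact fun a b h => Relation.ReflTransGen.stdSymm.symm a b h

noncomputable def ecomp (F : Finset (Sym2 V)) (e : Sym2 V) : Finset (Sym2 V) :=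
  F.filter (ereach F e)

lemma mem_ecomp {F : Finset (Sym2 V)} {e f : Sym2 V} :
    f ∈ ecomp F e ↔ f ∈ F ∧ ereach F e f := by simp [ecomp]

lemma ecomp_subset {F : Finset (Sym2 V)} {e : Sym2 V} : ecomp F e ⊆ F :=
  Finset.filter_subset _ _

lemma self_mem_ecomp {F : Finset (Sym2 V)} {e : Sym2 V} (he : e ∈ F) : e ∈ ecomp F e :=
  mem_ecomp.2 ⟨he, Relation.ReflTransGen.refl⟩

/-- closed subsets of an edge set -/
def EClosed (F Q : Finset (Sym2 V)) : Prop :=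
  Q ⊆ F ∧ ∀ e ∈ Q, ∀ f ∈ F, (∃ z : V, z ∈ e ∧ z ∈ f) → f ∈ Q

lemma ecomp_closed {F : Finset (Sym2 V)} {e : Sym2 V} : EClosed F (ecomp F e) := by
  refine ⟨ecomp_subset, ?_⟩
  intro g hg f hf hz
  rw [mem_ecomp] at hg ⊢
  exact ⟨hf, hg.2.tail ⟨hg.1, hf, hz⟩⟩

lemma eclosed_union {F Q R : Finset (Sym2 V)} (hQ : EClosed F Q) (hR : EClosed F R) :
    EClosed F (Q ∪ R) := by
  refine ⟨Finset.union_subset hQ.1 hR.1, ?_⟩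
  intro e he f hf hz
  rcases Finset.mem_union.1 he with he | he
  · exact Finset.mem_union_left _ (hQ.2 e he f hf hz)
  · exact Finset.mem_union_right _ (hR.2 e he f hf hz)

lemma eclosed_sdiff {F Q : Finset (Sym2 V)} (hQ : EClosed F Q) : EClosed F (F \ Q) := by
  refine ⟨Finset.sdiff_subset, ?_⟩
  intro e he f hf hz
  rw [Finset.mem_sdiff] at he ⊢
  refine ⟨hf, fun hfQ => he.2 ?_⟩
  exact hQ.2 f hfQ e he.1 ⟨hz.choose, hz.choose_spec.2, hz.choose_spec.1⟩

lemma ecomp_eq_of_mem {F : Finset (Sym2 V)} {e f : Sym2 V} (hf : f ∈ ecomp F e) :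
    ecomp F f = ecomp F e := by
  rw [mem_ecomp] at hf
  ext g
  rw [mem_ecomp, mem_ecomp]
  constructor
  · rintro ⟨hg, hr⟩; exact ⟨hg, hf.2.trans hr⟩
  · rintro ⟨hg, hr⟩; exact ⟨hg, (ereach_symm hf.2).trans hr⟩

lemma ecomp_eq_or_disjoint {F : Finset (Sym2 V)} (e f : Sym2 V) :
    ecomp F e = ecomp F f ∨ Disjoint (ecomp F e) (ecomp F f) := by
  by_cases h : Disjoint (ecomp F e) (ecomp F f)
  · exact Or.inr h
  · left
    rw [Finset.not_disjoint_iff] at h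
    obtain ⟨g, hg1, hg2⟩ := h
    rw [← ecomp_eq_of_mem hg1, ← ecomp_eq_of_mem hg2]

lemma not_mem_fcov_of_eclosed {F Q : Finset (Sym2 V)} (hQ : EClosed F Q) {e : Sym2 V}
    (he : e ∈ F) (hne : e ∉ Q) {z : V} (hz : z ∈ e) : z ∉ fcov Q := by
  rw [mem_fcov]
  rintro ⟨f, hf, hzf⟩
  exact hne (hQ.2 f hf e he ⟨z, hzf, hz⟩)

/-! ### snoc decomposition of chains, edge distance -/

lemma chainN_succ_iff_snoc {R : V → V → Prop} {n : ℕ} {x y : V} :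
    chainN R (n+1) x y ↔ ∃ g, chainN R n x g ∧ R g y := by
  induction n generalizing x with
  | zero =>
    constructor
    · rintro ⟨z, hz, hch⟩
      cases hch; exact ⟨x, rfl, hz⟩
    · rintro ⟨g, hg, hR⟩
      cases hg; exact ⟨y, hR, rfl⟩
  | succ n ih =>
    constructor
    · rintro ⟨z, hz, hch⟩
      obtain ⟨g, hg, hR⟩ := ih.1 hch
      exact ⟨g, ⟨z, hz, hg⟩, hR⟩
    · rintro ⟨g, hg, hR⟩
      obtain ⟨z, hz, hch⟩ := hg
      exact ⟨z, hz, ih.2 ⟨g, hch, hR⟩⟩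

noncomputable def edistE (F : Finset (Sym2 V)) (e₀ f : Sym2 V) : ℕ :=
  if h : ∃ n, chainN (estep F) n e₀ f then Nat.find h else 0

lemma edistE_spec {F : Finset (Sym2 V)} {e₀ f : Sym2 V} (h : ereach F e₀ f) :
    chainN (estep F) (edistE F e₀ f) e₀ f := by
  have h' := reflTransGen_iff_chainN.1 h
  rw [edistE, dif_pos h']
  exact Nat.find_spec h'

lemma edistE_le {F : Finset (Sym2 V)} {e₀ f : Sym2 V} {n : ℕ}
    (h : chainN (estep F) n e₀ f) : edistE F e₀ f ≤ n := by
  have h' : ∃ n, chainN (estep F) n e₀ f := ⟨n, h⟩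
  rw [edistE, dif_pos h']
  exact Nat.find_le h

lemma edistE_self {F : Finset (Sym2 V)} {e₀ : Sym2 V} : edistE F e₀ e₀ = 0 :=
  Nat.le_zero.1 (edistE_le (rfl : chainN (estep F) 0 e₀ e₀))

/-- a connected edge set of non-loop edges covers at most `card + 1` vertices. -/
lemma conn_card : ∀ (k : ℕ) (F : Finset (Sym2 V)), F.card ≤ k →
    (∀ e ∈ F, ¬ e.IsDiag) → ∀ e₀ ∈ F, (∀ f ∈ F, ereach F e₀ f) →
    (fcov F).card ≤ F.card + 1 := by
  intro k
  induction k with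
  | zero =>
    intro F hcard _ e₀ he₀ _
    have h : F = ∅ := Finset.card_eq_zero.1 (Nat.le_zero.1 hcard)
    subst h
    simp at he₀
  | succ k ih =>
    intro F hcard hd e₀ he₀ hconn
    by_cases hle : F.card ≤ k
    · exact ih F hle hd e₀ he₀ hconn
    have hcard' : F.card = k + 1 := by omega
    -- pick an edge farthest from e₀
    obtain ⟨e₁, he₁, hmax⟩ := Finset.exists_max_image F (edistE F e₀) ⟨e₀, he₀⟩
    by_cases hzero : edistE F e₀ e₁ = 0
    · -- all edges equal e₀
      have hFsub : F ⊆ {e₀} := by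
        intro f hf
        have h1 : edistE F e₀ f = 0 := Nat.le_zero.1 (hzero ▸ hmax f hf)
        have h2 := edistE_spec (hconn f hf)
        rw [h1] at h2
        rw [Finset.mem_singleton]
        exact h2.symm
      have h1 : F = {e₀} := Finset.Subset.antisymm hFsub (Finset.singleton_subset_iff.2 he₀)
      rw [h1, fcov_singleton, card_everts (hd e₀ he₀), Finset.card_singleton]
    · have he₀e₁ : e₀ ≠ e₁ := by
        intro h; rw [← h, edistE_self] at hzero; exact hzero rfl
      set F' := F.erase e₁ with hF'def
      have he₀F' : e₀ ∈ F' := Finset.mem_erase.2 ⟨he₀e₁, he₀⟩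
      have hF'card : F'.card = k := by
        rw [hF'def, Finset.card_erase_of_mem he₁]; omega
      -- connectivity of F'
      have hkey : ∀ n, ∀ f ∈ F, f ≠ e₁ → edistE F e₀ f ≤ n → ereach F' e₀ f := by
        intro n
        induction n with
        | zero =>
          intro f hf hne h0
          have h2 := edistE_spec (hconn f hf)
          rw [Nat.le_zero.1 h0] at h2
          rw [← h2]
          exact Relation.ReflTransGen.refl
        | succ n ihn =>
          intro f hf hne hle2
          by_cases hln : edistE F e₀ f ≤ n
          · exact ihn f hf hne hln
          have heq : edistE F e₀ f = n + 1 := by omega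
          have hch := edistE_spec (hconn f hf)
          rw [heq] at hch
          obtain ⟨g, hgch, hstep⟩ := chainN_succ_iff_snoc.1 hch
          have hgF : g ∈ F := hstep.1
          have hgd : edistE F e₀ g ≤ n := edistE_le hgch
          have hge₁ : g ≠ e₁ := by
            intro h
            have := hmax f hf
            rw [← h] at this
            omega
          have hgr := ihn g hgF hge₁ hgd
          exact hgr.tail ⟨Finset.mem_erase.2 ⟨hge₁, hgF⟩, Finset.mem_erase.2 ⟨hne, hf⟩, hstep.2.2⟩
      have hconn' : ∀ f ∈ F', ereach F' e₀ f := by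
        intro f hf
        obtain ⟨hne, hfF⟩ := Finset.mem_erase.1 hf
        exact hkey (edistE F e₀ f) f hfF hne le_rfl
      have ihF' := ih F' (by omega) (fun e he => hd e (Finset.mem_of_mem_erase he)) e₀ he₀F' hconn'
      -- e₁ shares a vertex with F'
      obtain ⟨m, hm⟩ : ∃ m, edistE F e₀ e₁ = m + 1 := ⟨edistE F e₀ e₁ - 1, by omega⟩
      have hch := edistE_spec (hconn e₁ he₁)
      rw [hm] at hch
      obtain ⟨g, hgch, hstep⟩ := chainN_succ_iff_snoc.1 hch
      have hgd : edistE F e₀ g ≤ m := edistE_le hgch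
      have hge₁ : g ≠ e₁ := by
        intro h; rw [h] at hgd; omega
      obtain ⟨z, hzg, hze₁⟩ := hstep.2.2
      have hzF' : z ∈ fcov F' := mem_fcov.2 ⟨g, Finset.mem_erase.2 ⟨hge₁, hstep.1⟩, hzg⟩
      -- assemble
      have hsplit : F = F' ∪ {e₁} := by
        rw [hF'def]
        ext g'
        simp only [Finset.mem_union, Finset.mem_erase, Finset.mem_singleton]
        constructor
        · intro h; by_cases hg' : g' = e₁
          · exact Or.inr hg'
          · exact Or.inl ⟨hg', h⟩
        · rintro (⟨_, h⟩ | rfl)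
          · exact h
          · exact he₁
      have hfcov : fcov F = fcov F' ∪ Finset.univ.filter (· ∈ e₁) := by
        rw [hsplit, fcov_union, fcov_singleton]
      have hsub2 : Finset.univ.filter (· ∈ e₁) \ fcov F' ⊆ (Finset.univ.filter (· ∈ e₁)).erase z := by
        intro t ht
        rw [Finset.mem_sdiff] at ht
        refine Finset.mem_erase.2 ⟨?_, ht.1⟩
        intro h; rw [h] at ht; exact ht.2 hzF'
      have hfcov2 : fcov F = fcov F' ∪ (Finset.univ.filter (· ∈ e₁) \ fcov F') := by
        rw [hfcov, Finset.union_sdiff_self_eq_union]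
      calc (fcov F).card = (fcov F').card + (Finset.univ.filter (· ∈ e₁) \ fcov F').card := by
            rw [hfcov2, Finset.card_union_of_disjoint Finset.disjoint_sdiff]
      _ ≤ (fcov F').card + 1 := by
            have h1 := Finset.card_le_card hsub2
            have h2 : ((Finset.univ.filter (· ∈ e₁)).erase z).card = 1 := by
              rw [Finset.card_erase_of_mem (by simp [hze₁]), card_everts (hd e₁ he₁)]
            omega
      _ ≤ F.card + 1 := by omega

lemma sum_deg (F : Finset (Sym2 V)) (hd : ∀ e ∈ F, ¬ e.IsDiag) :
    ∑ z ∈ fcov F, (F.filter (z ∈ ·)).card = 2 * F.card := by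
  classical
  have h0 : ∀ z ∈ Finset.univ \ fcov F, (F.filter (z ∈ ·)).card = 0 := by
    intro z hz
    rw [Finset.mem_sdiff] at hz
    rw [Finset.card_eq_zero, Finset.filter_eq_empty_iff]
    intro e he hze
    exact hz.2 (mem_fcov.2 ⟨e, he, hze⟩)
  have h1 : ∑ z ∈ fcov F, (F.filter (z ∈ ·)).card
      = ∑ z : V, (F.filter (z ∈ ·)).card := by
    rw [← Finset.sum_subset (Finset.subset_univ (fcov F))]
    intro z _ hz
    exact h0 z (Finset.mem_sdiff.2 ⟨Finset.mem_univ z, hz⟩)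
  rw [h1]
  have h2 : ∀ z : V, (F.filter (z ∈ ·)).card = ∑ e ∈ F, if z ∈ e then 1 else 0 := by
    intro z; rw [Finset.card_filter]
  simp_rw [h2]
  rw [Finset.sum_comm]
  have h3 : ∀ e ∈ F, (∑ z : V, if z ∈ e then 1 else 0) = 2 := by
    intro e he
    rw [← Finset.card_filter]
    exact card_everts (hd e he)
  rw [Finset.sum_congr rfl h3, Finset.sum_const, smul_eq_mul, mul_comm]

/-- a connected edge set with max degree two has at most two degree-one vertices -/
lemma ends_le_two {F : Finset (Sym2 V)} (hd : ∀ e ∈ F, ¬ e.IsDiag)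
    {e₀ : Sym2 V} (he₀ : e₀ ∈ F) (hconn : ∀ f ∈ F, ereach F e₀ f)
    (hdeg : ∀ z : V, (F.filter (z ∈ ·)).card ≤ 2) :
    ((fcov F).filter (fun z => (F.filter (z ∈ ·)).card = 1)).card ≤ 2 := by
  classical
  have hcc := conn_card F.card F le_rfl hd e₀ he₀ hconn
  have hsum := sum_deg F hd
  have hsplit : ∑ z ∈ fcov F, (2 - (F.filter (z ∈ ·)).card) + ∑ z ∈ fcov F, (F.filter (z ∈ ·)).card
      = 2 * (fcov F).card := by
    rw [← Finset.sum_add_distrib]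
    have : ∀ z ∈ fcov F, (2 - (F.filter (z ∈ ·)).card) + (F.filter (z ∈ ·)).card = 2 := by
      intro z _
      have := hdeg z
      omega
    rw [Finset.sum_congr rfl this, Finset.sum_const, smul_eq_mul, mul_comm]
  have hends : ((fcov F).filter (fun z => (F.filter (z ∈ ·)).card = 1)).card
      ≤ ∑ z ∈ fcov F, (2 - (F.filter (z ∈ ·)).card) := by
    calc ((fcov F).filter (fun z => (F.filter (z ∈ ·)).card = 1)).card
        = ∑ z ∈ (fcov F).filter (fun z => (F.filter (z ∈ ·)).card = 1), 1 := by
          rw [Finset.sum_const, smul_eq_mul, mul_one]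
    _ ≤ ∑ z ∈ (fcov F).filter (fun z => (F.filter (z ∈ ·)).card = 1), (2 - (F.filter (z ∈ ·)).card) := by
          apply Finset.sum_le_sum
          intro z hz
          rw [Finset.mem_filter] at hz
          omega
    _ ≤ _ := Finset.sum_le_sum_of_subset (Finset.filter_subset _ _)
  omega

/-! ### swapping a matching along a closed part of a symmetric difference -/

lemma mem_symmdiff {M N : Finset (Sym2 V)} {e : Sym2 V} :
    e ∈ (M ∪ N) \ (M ∩ N) ↔ (e ∈ M ∧ e ∉ N) ∨ (e ∈ N ∧ e ∉ M) := by
  simp only [Finset.mem_sdiff, Finset.mem_union, Finset.mem_inter]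
  tauto

lemma symmdiff_comm (M N : Finset (Sym2 V)) :
    (M ∪ N) \ (M ∩ N) = (N ∪ M) \ (N ∩ M) := by
  rw [Finset.union_comm, Finset.inter_comm]

lemma swap_matching {G : SimpleGraph V} {M N : Finset (Sym2 V)}
    (hM : IsGMatching G M) (hN : IsGMatching G N) {Q : Finset (Sym2 V)}
    (hQ : EClosed ((M ∪ N) \ (M ∩ N)) Q) : IsGMatching G ((M \ Q) ∪ (Q ∩ N)) := by
  have hQN : Q ∩ N ⊆ N := Finset.inter_subset_right
  constructor
  · intro e he
    rcases Finset.mem_union.1 he with he | he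
    · exact hM.1 e (Finset.mem_sdiff.1 he).1
    · exact hN.1 e (hQN he)
  · intro e he f hf hef z hz hzf
    rcases Finset.mem_union.1 he with he | he <;> rcases Finset.mem_union.1 hf with hf | hf
    · exact hM.2 e (Finset.mem_sdiff.1 he).1 f (Finset.mem_sdiff.1 hf).1 hef z hz hzf
    · -- e ∈ M \ Q, f ∈ Q ∩ N
      obtain ⟨heM, heQ⟩ := Finset.mem_sdiff.1 he
      obtain ⟨hfQ, hfN⟩ := Finset.mem_inter.1 hf
      by_cases heN : e ∈ N
      · exact hN.2 e heN f hfN hef z hz hzf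
      · have heF : e ∈ (M ∪ N) \ (M ∩ N) :=
          mem_symmdiff.2 (Or.inl ⟨heM, heN⟩)
        exact heQ (hQ.2 f hfQ e heF ⟨z, hzf, hz⟩)
    · obtain ⟨hfM, hfQ⟩ := Finset.mem_sdiff.1 hf
      obtain ⟨heQ, heN⟩ := Finset.mem_inter.1 he
      by_cases hfN : f ∈ N
      · exact hN.2 e heN f hfN hef z hz hzf
      · have hfF : f ∈ (M ∪ N) \ (M ∩ N) :=
          mem_symmdiff.2 (Or.inl ⟨hfM, hfN⟩)
        exact hfQ (hQ.2 e heQ f hfF ⟨z, hz, hzf⟩)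
    · exact hN.2 e (hQN he) f (hQN hf) hef z hz hzf

lemma swap_card {M N Q : Finset (Sym2 V)} (hsub : Q ⊆ (M ∪ N) \ (M ∩ N)) :
    ((M \ Q) ∪ (Q ∩ N)).card + (Q ∩ M).card = M.card + (Q ∩ N).card := by
  have hdisj : Disjoint (M \ Q) (Q ∩ N) := by
    rw [Finset.disjoint_left]
    intro e he hf
    exact (Finset.mem_sdiff.1 he).2 (Finset.mem_inter.1 hf).1
  have h1 : M \ Q = M \ (Q ∩ M) := by
    ext e
    simp only [Finset.mem_sdiff, Finset.mem_inter]
    tauto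
  have h2 : (Q ∩ M) ⊆ M := Finset.inter_subset_right
  have h3 := Finset.card_sdiff_of_subset h2
  have h4 := Finset.card_le_card h2
  rw [Finset.card_union_of_disjoint hdisj, h1, h3]
  omega

lemma fcov_swap_iff {M N Q : Finset (Sym2 V)} {z : V} (hz : z ∉ fcov Q) :
    z ∈ fcov ((M \ Q) ∪ (Q ∩ N)) ↔ z ∈ fcov M := by
  rw [fcov_union, Finset.mem_union]
  constructor
  · rintro (h | h)
    · exact fcov_mono Finset.sdiff_subset h
    · exact absurd (fcov_mono Finset.inter_subset_left h) hz
  · intro h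
    left
    obtain ⟨e, he, hze⟩ := mem_fcov.1 h
    refine mem_fcov.2 ⟨e, Finset.mem_sdiff.2 ⟨he, fun heQ => ?_⟩, hze⟩
    exact hz (mem_fcov.2 ⟨e, heQ, hze⟩)

lemma ecomp_subset_closed {F Q : Finset (Sym2 V)} (hQ : EClosed F Q) {e : Sym2 V}
    (he : e ∈ Q) : ecomp F e ⊆ Q := by
  intro f hf
  have hr := (mem_ecomp.1 hf).2
  clear hf
  induction hr with
  | refl => exact he
  | tail hab hbc ih => exact hQ.2 _ ih _ hbc.2.1 hbc.2.2

lemma ereach_ecomp_restrict {F : Finset (Sym2 V)} {e f : Sym2 V}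
    (h : ereach F e f) : ereach (ecomp F e) e f := by
  induction h with
  | refl => exact Relation.ReflTransGen.refl
  | @tail b c hab hbc ih =>
    have hbS : b ∈ ecomp F e := mem_ecomp.2 ⟨hbc.1, hab⟩
    have hcS : c ∈ ecomp F e := ecomp_closed.2 b hbS c hbc.2.1 hbc.2.2
    exact ih.tail ⟨hbS, hcS, hbc.2.2⟩

/-! ### the stability lemma -/

lemma stability {G : SimpleGraph V} {a : V} (ha : a ∈ Aset G) {v : V}
    (hv : v ∈ Dset (delV G a)) (hva : v ≠ a) : v ∈ Dset G := by
  classical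
  obtain ⟨haD, d0, hd0D, hadj0⟩ := ha
  by_contra hvD
  have hvd0 : v ≠ d0 := fun h => hvD (h ▸ hd0D)
  have had0 : a ≠ d0 := fun h => haD (h ▸ hd0D)
  have hne : gnu (delV G a) ≠ gnu G := haD
  have h1 := gnu_delV_le G a
  have h2 := gnu_le_gnu_delV_add_one G a
  have hgnu' : gnu (delV G a) + 1 = gnu G := by omega
  obtain ⟨M1, hM1, hM1c, hvM1⟩ := mem_Dset_iff.1 hv
  rw [matching_delV_iff] at hM1
  obtain ⟨hM1G, haM1⟩ := hM1
  obtain ⟨N, hNG, hNc, hd0N⟩ := mem_Dset_iff.1 hd0D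
  have haN : a ∈ fcov N := covered_of_not_mem_Dset haD hNG hNc
  have hvN : v ∈ fcov N := covered_of_not_mem_Dset hvD hNG hNc
  have winv : ∀ K : Finset (Sym2 V), IsGMatching G K → K.card = gnu G → v ∉ fcov K → False := by
    intro K hK hKc hvK
    exact hvD (mem_Dset_iff.2 ⟨K, hK, hKc, hvK⟩)
  have wina : ∀ K : Finset (Sym2 V), IsGMatching G K → K.card = gnu G → a ∉ fcov K → False := by
    intro K hK hKc haK
    exact haD (mem_Dset_iff.2 ⟨K, hK, hKc, haK⟩)
  by_cases hd0M1 : d0 ∈ fcov M1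
  swap
  · obtain ⟨hmat, hcard⟩ := matching_insert hM1G hadj0 haM1 hd0M1
    refine winv _ hmat (by omega) ?_
    rw [mem_fcov]; rintro ⟨e, he, hve⟩
    rcases Finset.mem_insert.1 he with rfl | heM
    · rcases Sym2.mem_iff.1 hve with rfl | rfl
      · exact hva rfl
      · exact hvd0 rfl
    · exact hvM1 (mem_fcov.2 ⟨e, heM, hve⟩)
  obtain ⟨ed0, hed0M, hd0ed0⟩ := mem_fcov.1 hd0M1
  obtain ⟨ea, heaN, haea⟩ := mem_fcov.1 haN
  obtain ⟨ev, hevN, hvev⟩ := mem_fcov.1 hvN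
  set F := (M1 ∪ N) \ (M1 ∩ N) with hFdef
  have hcard_rel : N.card = M1.card + 1 := by omega
  have heaM1 : ea ∉ M1 := fun h => haM1 (mem_fcov.2 ⟨ea, h, haea⟩)
  have hevM1 : ev ∉ M1 := fun h => hvM1 (mem_fcov.2 ⟨ev, h, hvev⟩)
  have hed0N : ed0 ∉ N := fun h => hd0N (mem_fcov.2 ⟨ed0, h, hd0ed0⟩)
  have heaF : ea ∈ F := mem_symmdiff.2 (Or.inr ⟨heaN, heaM1⟩)
  have hevF : ev ∈ F := mem_symmdiff.2 (Or.inr ⟨hevN, hevM1⟩)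
  have hed0F : ed0 ∈ F := mem_symmdiff.2 (Or.inl ⟨hed0M, hed0N⟩)
  have haonly : ∀ f ∈ F, a ∈ f → f = ea := by
    intro f hf haf
    rcases mem_symmdiff.1 hf with ⟨hfM, _⟩ | ⟨hfN, _⟩
    · exact absurd (mem_fcov.2 ⟨f, hfM, haf⟩) haM1
    · exact matching_unique_edge hNG hfN heaN haf haea
  have hvonly : ∀ f ∈ F, v ∈ f → f = ev := by
    intro f hf hvf
    rcases mem_symmdiff.1 hf with ⟨hfM, _⟩ | ⟨hfN, _⟩
    · exact absurd (mem_fcov.2 ⟨f, hfM, hvf⟩) hvM1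
    · exact matching_unique_edge hNG hfN hevN hvf hvev
  have hd0only : ∀ f ∈ F, d0 ∈ f → f = ed0 := by
    intro f hf hdf
    rcases mem_symmdiff.1 hf with ⟨hfM, _⟩ | ⟨hfN, _⟩
    · exact matching_unique_edge hM1G hfM hed0M hdf hd0ed0
    · exact absurd (mem_fcov.2 ⟨f, hfN, hdf⟩) hd0N
  have dich : ∀ Q : Finset (Sym2 V), EClosed F Q →
      (Q ∩ N).card = (Q ∩ M1).card ∨ (Q ∩ N).card = (Q ∩ M1).card + 1 := by
    intro Q hQ
    have hs1 := swap_card (M := M1) (N := N) (Q := Q) hQ.1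
    have hm1 := le_gnu (swap_matching hM1G hNG hQ)
    have hQ' : EClosed ((N ∪ M1) \ (N ∩ M1)) Q := by
      rw [symmdiff_comm N M1]; exact hQ
    have hs2 := swap_card (M := N) (N := M1) (Q := Q) hQ'.1
    have hm2 := le_gnu (swap_matching hNG hM1G hQ')
    omega
  have hFplus : (F ∩ N).card = (F ∩ M1).card + 1 := by
    have h1 : F ∩ N = N \ M1 := by
      ext e
      simp only [hFdef, Finset.mem_inter, Finset.mem_sdiff, Finset.mem_union]
      tauto
    have h2 : F ∩ M1 = M1 \ N := by
      ext e
      simp only [hFdef, Finset.mem_inter, Finset.mem_sdiff, Finset.mem_union]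
      tauto
    have h3 := Finset.card_sdiff_add_card_inter N M1
    have h4 := Finset.card_sdiff_add_card_inter M1 N
    rw [Finset.inter_comm] at h3
    rw [h1, h2]
    omega
  have winvQ : ∀ Q : Finset (Sym2 V), EClosed F Q →
      (Q ∩ N).card = (Q ∩ M1).card + 1 → v ∉ fcov Q → False := by
    intro Q hQ hplus hvQ
    have hmat := swap_matching hM1G hNG hQ
    have hcard := swap_card (M := M1) (N := N) (Q := Q) hQ.1
    refine winv _ hmat (by omega) ?_
    rw [fcov_swap_iff hvQ]
    exact hvM1
  have winaQ : ∀ Q : Finset (Sym2 V), EClosed F Q →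
      (Q ∩ N).card = (Q ∩ M1).card + 1 → a ∉ fcov Q → False := by
    intro Q hQ hplus haQ
    have hmat := swap_matching hM1G hNG hQ
    have hcard := swap_card (M := M1) (N := N) (Q := Q) hQ.1
    refine wina _ hmat (by omega) ?_
    rw [fcov_swap_iff haQ]
    exact haM1
  have split : ∀ (R X : Finset (Sym2 V)), R ⊆ F →
      (R ∩ X).card + ((F \ R) ∩ X).card = (F ∩ X).card := by
    intro R X hRF
    have h1 : (F \ R) ∩ X = (F ∩ X) \ (R ∩ X) := by
      ext e
      simp only [Finset.mem_sdiff, Finset.mem_inter]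
      constructor
      · rintro ⟨⟨heF, heR⟩, heX⟩
        exact ⟨⟨heF, heX⟩, fun h => heR h.1⟩
      · rintro ⟨⟨heF, heX⟩, h⟩
        exact ⟨⟨heF, fun hR => h ⟨hR, heX⟩⟩, heX⟩
    have hsub : R ∩ X ⊆ F ∩ X := fun e he =>
      Finset.mem_inter.2 ⟨hRF (Finset.mem_inter.1 he).1, (Finset.mem_inter.1 he).2⟩
    have h2 := Finset.card_sdiff_of_subset hsub
    have h3 := Finset.card_le_card hsub
    rw [h1]
    omega
  have notin_fcov : ∀ (w : V) (ew : Sym2 V), (∀ f ∈ F, w ∈ f → f = ew) →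
      ∀ Q : Finset (Sym2 V), Q ⊆ F → ew ∉ Q → w ∉ fcov Q := by
    intro w ew honly Q hQF hew hmem
    obtain ⟨f, hfQ, hwf⟩ := mem_fcov.1 hmem
    exact hew ((honly f (hQF hfQ) hwf) ▸ hfQ)
  set Qa := ecomp F ea with hQadef
  set Qv := ecomp F ev with hQvdef
  have hQaC : EClosed F Qa := ecomp_closed
  have hQvC : EClosed F Qv := ecomp_closed
  have heaQa : ea ∈ Qa := self_mem_ecomp heaF
  have hevQv : ev ∈ Qv := self_mem_ecomp hevF
  by_cases hQav : Qa = Qv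
  · -- Qa = Qv
    set T := F \ Qa with hTdef
    have hTC : EClosed F T := eclosed_sdiff hQaC
    have hsN := split Qa N hQaC.1
    have hsM := split Qa M1 hQaC.1
    rw [← hTdef] at hsN hsM
    rcases dich Qa hQaC with hA | hA
    · -- T is the augmenting part
      have hT : (T ∩ N).card = (T ∩ M1).card + 1 := by
        rcases dich T hTC with h | h
        · exfalso; omega
        · exact h
      refine winvQ T hTC hT (notin_fcov v ev hvonly T hTC.1 ?_)
      intro hmemT
      exact (Finset.mem_sdiff.1 hmemT).2 (hQav ▸ hevQv)
    · -- Qa is the augmenting part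
      by_cases hd0Qa : d0 ∈ fcov Qa
      · -- corner case : three degree-one vertices in one component
        have hdQa : ∀ e ∈ Qa, ¬ e.IsDiag := by
          intro e he
          rcases mem_symmdiff.1 (hQaC.1 he) with ⟨h, _⟩ | ⟨h, _⟩
          · exact edge_not_diag (hM1G.1 e h)
          · exact edge_not_diag (hNG.1 e h)
        have hconnQa : ∀ f ∈ Qa, ereach Qa ea f := by
          intro f hf
          rw [hQadef] at hf ⊢
          exact ereach_ecomp_restrict (mem_ecomp.1 hf).2
        have hdeg : ∀ z : V, (Qa.filter (z ∈ ·)).card ≤ 2 := by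
          intro z
          have hsub : Qa.filter (z ∈ ·) ⊆ M1.filter (z ∈ ·) ∪ N.filter (z ∈ ·) := by
            intro f hf
            obtain ⟨hfQ, hzf⟩ := Finset.mem_filter.1 hf
            rcases mem_symmdiff.1 (hQaC.1 hfQ) with ⟨h, _⟩ | ⟨h, _⟩
            · exact Finset.mem_union_left _ (Finset.mem_filter.2 ⟨h, hzf⟩)
            · exact Finset.mem_union_right _ (Finset.mem_filter.2 ⟨h, hzf⟩)
          have hM1le : (M1.filter (z ∈ ·)).card ≤ 1 := by
            rw [Finset.card_le_one]
            intro e he f hf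
            simp only [Finset.mem_filter] at he hf
            exact matching_unique_edge hM1G he.1 hf.1 he.2 hf.2
          have hNle : (N.filter (z ∈ ·)).card ≤ 1 := by
            rw [Finset.card_le_one]
            intro e he f hf
            simp only [Finset.mem_filter] at he hf
            exact matching_unique_edge hNG he.1 hf.1 he.2 hf.2
          calc (Qa.filter (z ∈ ·)).card ≤ _ := Finset.card_le_card hsub
          _ ≤ _ := Finset.card_union_le _ _
          _ ≤ 2 := by omega
        have hend : ∀ (w : V) (ew : Sym2 V), ew ∈ Qa → w ∈ ew → (∀ f ∈ F, w ∈ f → f = ew) →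
            w ∈ (fcov Qa).filter (fun z => (Qa.filter (z ∈ ·)).card = 1) := by
          intro w ew hewQ hwew honly
          refine Finset.mem_filter.2 ⟨mem_fcov.2 ⟨ew, hewQ, hwew⟩, ?_⟩
          have heq : Qa.filter (w ∈ ·) = {ew} := by
            ext f
            simp only [Finset.mem_filter, Finset.mem_singleton]
            constructor
            · rintro ⟨hfQ, hwf⟩
              exact honly f (hQaC.1 hfQ) hwf
            · rintro rfl
              exact ⟨hewQ, hwew⟩
          rw [heq, Finset.card_singleton]
        have ha' := hend a ea heaQa haea haonly
        have hv' := hend v ev (hQav ▸ hevQv) hvev hvonly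
        have hed0Qa : ed0 ∈ Qa := by
          obtain ⟨f, hfQ, hdf⟩ := mem_fcov.1 hd0Qa
          have heq := hd0only f (hQaC.1 hfQ) hdf
          rwa [heq] at hfQ
        have hd0' := hend d0 ed0 hed0Qa hd0ed0 hd0only
        have h3sub : ({a, v, d0} : Finset V) ⊆
            (fcov Qa).filter (fun z => (Qa.filter (z ∈ ·)).card = 1) := by
          intro w hw
          rcases Finset.mem_insert.1 hw with rfl | hw
          · exact ha'
          rcases Finset.mem_insert.1 hw with rfl | hw
          · exact hv'
          rw [Finset.mem_singleton] at hw
          subst hw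
          exact hd0'
        have h3 : ({a, v, d0} : Finset V).card = 3 := by
          rw [Finset.card_insert_of_notMem (by simp [Ne.symm hva, had0]),
            Finset.card_insert_of_notMem (by simp [hvd0]), Finset.card_singleton]
        have hle := ends_le_two hdQa heaQa hconnQa hdeg
        have := Finset.card_le_card h3sub
        omega
      · -- swap N along Qa, then add the edge a d0
        have hQa' : EClosed ((N ∪ M1) \ (N ∩ M1)) Qa := by
          rw [symmdiff_comm N M1]; exact hQaC
        have hmat := swap_matching hNG hM1G hQa'
        have hcard := swap_card (M := N) (N := M1) (Q := Qa) hQa'.1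
        have hNsc : ((N \ Qa) ∪ (Qa ∩ M1)).card + 1 = gnu G := by omega
        have haNs : a ∉ fcov ((N \ Qa) ∪ (Qa ∩ M1)) := by
          rw [fcov_union, Finset.mem_union]
          rintro (h | h)
          · obtain ⟨f, hf, haf⟩ := mem_fcov.1 h
            obtain ⟨hfN, hfQa⟩ := Finset.mem_sdiff.1 hf
            have : f = ea := matching_unique_edge hNG hfN heaN haf haea
            exact hfQa (this ▸ heaQa)
          · exact haM1 (fcov_mono Finset.inter_subset_right h)
        have hvNs : v ∉ fcov ((N \ Qa) ∪ (Qa ∩ M1)) := by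
          rw [fcov_union, Finset.mem_union]
          rintro (h | h)
          · obtain ⟨f, hf, hvf⟩ := mem_fcov.1 h
            obtain ⟨hfN, hfQa⟩ := Finset.mem_sdiff.1 hf
            have : f = ev := matching_unique_edge hNG hfN hevN hvf hvev
            exact hfQa (this ▸ (hQav ▸ hevQv))
          · exact hvM1 (fcov_mono Finset.inter_subset_right h)
        have hd0Ns : d0 ∉ fcov ((N \ Qa) ∪ (Qa ∩ M1)) := by
          rw [fcov_union, Finset.mem_union]
          rintro (h | h)
          · exact hd0N (fcov_mono Finset.sdiff_subset h)
          · exact hd0Qa (fcov_mono Finset.inter_subset_left h)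
        obtain ⟨hmat2, hcard2⟩ := matching_insert hmat hadj0 haNs hd0Ns
        refine winv _ hmat2 (by omega) ?_
        rw [mem_fcov]
        rintro ⟨e, he, hve⟩
        rcases Finset.mem_insert.1 he with rfl | heM
        · rcases Sym2.mem_iff.1 hve with rfl | rfl
          · exact hva rfl
          · exact hvd0 rfl
        · exact hvNs (mem_fcov.2 ⟨e, heM, hve⟩)
  · -- Qa ≠ Qv : disjoint components
    have hdisj : Disjoint Qa Qv := by
      rcases ecomp_eq_or_disjoint (F := F) ea ev with h | h
      · exact absurd h hQav
      · exact h
    set S := Qa ∪ Qv with hSdef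
    have hSC : EClosed F S := eclosed_union hQaC hQvC
    set T := F \ S with hTdef
    have hTC : EClosed F T := eclosed_sdiff hSC
    have hsplitS : ∀ X : Finset (Sym2 V), (S ∩ X).card = (Qa ∩ X).card + (Qv ∩ X).card := by
      intro X
      rw [hSdef, Finset.union_inter_distrib_right]
      exact Finset.card_union_of_disjoint
        (hdisj.mono Finset.inter_subset_left Finset.inter_subset_left)
    have hsN := split S N hSC.1
    have hsM := split S M1 hSC.1
    rw [← hTdef] at hsN hsM
    have hsN' := hsplitS N
    have hsM' := hsplitS M1
    have hevQa : ev ∉ Qa := fun h => (Finset.disjoint_left.1 hdisj h) hevQv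
    have heaQv : ea ∉ Qv := fun h => (Finset.disjoint_right.1 hdisj h) heaQa
    rcases dich Qa hQaC with hA | hA
    · rcases dich Qv hQvC with hB | hB
      · have hT : (T ∩ N).card = (T ∩ M1).card + 1 := by
          rcases dich T hTC with h | h
          · exfalso; omega
          · exact h
        refine winvQ T hTC hT (notin_fcov v ev hvonly T hTC.1 ?_)
        intro hmemT
        exact (Finset.mem_sdiff.1 hmemT).2 (Finset.mem_union_right _ hevQv)
      · exact winaQ Qv hQvC hB (notin_fcov a ea haonly Qv hQvC.1 heaQv)
    · exact winvQ Qa hQaC hA (notin_fcov v ev hvonly Qa hQaC.1 hevQa)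

/-! ### structure of `D`, `A` after deleting a vertex of `A` -/

lemma gnu_delV_of_mem_A {G : SimpleGraph V} {a : V} (ha : a ∈ Aset G) :
    gnu (delV G a) + 1 = gnu G := by
  have hne : gnu (delV G a) ≠ gnu G := ha.1
  have h1 := gnu_delV_le G a
  have h2 := gnu_le_gnu_delV_add_one G a
  omega

lemma Dset_delV {G : SimpleGraph V} {a : V} (ha : a ∈ Aset G) :
    Dset (delV G a) = Dset G ∪ {a} := by
  ext v
  simp only [Set.mem_union, Set.mem_singleton_iff]
  constructor
  · intro hv
    by_cases hva : v = a
    · exact Or.inr hva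
    · exact Or.inl (stability ha hv hva)
  · rintro (hv | rfl)
    · -- v ∈ Dset G
      have h1 : gnu (delV (delV G a) v) ≤ gnu (delV G a) := gnu_delV_le _ _
      have h2 : gnu (delV G v) ≤ gnu (delV (delV G v) a) + 1 := gnu_le_gnu_delV_add_one _ _
      rw [delV_comm G v a] at h2
      have h3 := gnu_delV_of_mem_A ha
      have h4 : gnu (delV G v) = gnu G := hv
      show gnu (delV (delV G a) v) = gnu (delV G a)
      omega
    · show gnu (delV (delV G v) v) = gnu (delV G v)
      rw [delV_delV_self]

lemma Aset_delV {G : SimpleGraph V} {a : V} (ha : a ∈ Aset G) :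
    Aset (delV G a) = Aset G \ {a} := by
  have hD := Dset_delV ha
  ext w
  simp only [Aset, Set.mem_setOf_eq, Set.mem_diff, Set.mem_singleton_iff, hD,
    Set.mem_union]
  constructor
  · rintro ⟨hw, d, hd, hadj⟩
    obtain ⟨hadjG, hwa, hda⟩ := hadj
    have hdD : d ∈ Dset G := by
      rcases hd with hd | hd
      · exact hd
      · exact absurd hd hda
    exact ⟨⟨fun h => hw (Or.inl h), d, hdD, hadjG⟩, hwa⟩
  · rintro ⟨⟨hw, d, hd, hadj⟩, hwa⟩
    refine ⟨?_, d, Or.inl hd, hadj, hwa, fun h => ha.1 (h ▸ hd)⟩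
    rintro (h | h)
    · exact hw h
    · exact hwa h

lemma card_cc_delV {G : SimpleGraph V} {a : V} (haD : a ∉ Dset G) :
    Nat.card ((delV G a).induce (Dset G ∪ {a} : Set V)).ConnectedComponent
      = Nat.card (G.induce (Dset G)).ConnectedComponent + 1 := by
  classical
  set S : Set V := Dset G with hSdef
  have hamem : a ∈ (S ∪ {a} : Set V) := Or.inr rfl
  set H := G.induce S with hHdef
  set H' := (delV G a).induce (S ∪ {a} : Set V) with hH'def
  have hmemS : ∀ x : ↥(S ∪ {a} : Set V), (x : V) ≠ a → (x : V) ∈ S := by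
    intro x hx
    rcases x.2 with h | h
    · exact h
    · exact absurd h hx
  let φ : H →g H' := ⟨fun x => ⟨x.1, Or.inl x.2⟩, by
    rintro ⟨x, hx⟩ ⟨y, hy⟩ hadj
    exact ⟨hadj, fun h => haD (h ▸ hx), fun h => haD (h ▸ hy)⟩⟩
  let f : ↥(S ∪ {a} : Set V) → H.ConnectedComponent ⊕ Unit := fun x =>
    if h : (x : V) = a then Sum.inr ()
    else Sum.inl (H.connectedComponentMk ⟨x.1, hmemS x h⟩)
  have hadj_step : ∀ x y, H'.Adj x y → f x = f y := by
    rintro ⟨x, hx⟩ ⟨y, hy⟩ hadj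
    obtain ⟨hadjG, hxa, hya⟩ := hadj
    have hxa' : x ≠ a := hxa
    have hya' : y ≠ a := hya
    have hadjG' : G.Adj x y := hadjG
    simp only [f]
    rw [dif_neg hxa', dif_neg hya']
    refine congrArg Sum.inl (SimpleGraph.ConnectedComponent.eq.2 ?_)
    exact SimpleGraph.Adj.reachable (by exact hadjG')
  have hreach_step : ∀ x y, H'.Reachable x y → f x = f y := by
    intro x y hr
    obtain ⟨w⟩ := hr
    induction w with
    | nil => rfl
    | cons h p ih => rw [hadj_step _ _ h]; exact ih
  let bwd : H'.ConnectedComponent → H.ConnectedComponent ⊕ Unit :=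
    Quot.lift f hreach_step
  let fwd : H.ConnectedComponent ⊕ Unit → H'.ConnectedComponent :=
    Sum.elim (fun c => c.map φ) (fun _ => H'.connectedComponentMk ⟨a, hamem⟩)
  have hleft : ∀ c, fwd (bwd c) = c := by
    apply SimpleGraph.ConnectedComponent.ind
    intro x
    by_cases hxa : (x : V) = a
    · have : bwd (H'.connectedComponentMk x) = Sum.inr () := by
        simp only [bwd, f]
        exact dif_pos hxa
      rw [this]
      show H'.connectedComponentMk ⟨a, hamem⟩ = H'.connectedComponentMk x
      congr 1
      exact Subtype.ext hxa.symm
    · have : bwd (H'.connectedComponentMk x) =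
          Sum.inl (H.connectedComponentMk ⟨x.1, hmemS x hxa⟩) := by
        simp only [bwd, f]
        exact dif_neg hxa
      rw [this]
      show (H.connectedComponentMk ⟨x.1, hmemS x hxa⟩).map φ = H'.connectedComponentMk x
      rw [SimpleGraph.ConnectedComponent.map_mk]
      exact congrArg H'.connectedComponentMk (Subtype.ext rfl)
  have hright : ∀ z, bwd (fwd z) = z := by
    rintro (c | u)
    · revert c
      apply SimpleGraph.ConnectedComponent.ind
      intro x
      show bwd ((H.connectedComponentMk x).map φ) = Sum.inl (H.connectedComponentMk x)
      rw [SimpleGraph.ConnectedComponent.map_mk]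
      have hxa : ((φ x : ↥(S ∪ {a} : Set V)) : V) ≠ a := fun h => haD (h ▸ x.2)
      show f (φ x) = _
      have h1 : f (φ x) = Sum.inl (H.connectedComponentMk ⟨(φ x : ↥(S ∪ {a} : Set V)).1, hmemS _ hxa⟩) :=
        dif_neg hxa
      rw [h1]
      have h2 : (⟨(φ x : ↥(S ∪ {a} : Set V)).1, hmemS _ hxa⟩ : ↥S) = x := Subtype.ext rfl
      rw [h2]
    · cases u
      show bwd (H'.connectedComponentMk ⟨a, hamem⟩) = Sum.inr ()
      show f ⟨a, hamem⟩ = Sum.inr ()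
      exact dif_pos rfl
  let E : H'.ConnectedComponent ≃ (H.ConnectedComponent ⊕ Unit) :=
    ⟨bwd, fwd, hleft, hright⟩
  rw [Nat.card_congr E, Nat.card_sum]
  simp

/-! ### translation between reachOn and Reachable in the induced graph -/

lemma reachOn_to_reachable {G : SimpleGraph V} {S : Set V} {u v : V}
    (h : reachOn' G S u v) (hu : u ∈ S) :
    ∀ (hv : v ∈ S), (G.induce S).Reachable ⟨u, hu⟩ ⟨v, hv⟩ := by
  induction h with
  | refl => intro hv; exact SimpleGraph.Reachable.refl _
  | @tail b c hab hbc ih =>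
    intro hv
    have hb : b ∈ S := hbc.2.1
    exact (ih hb).trans (SimpleGraph.Adj.reachable (by exact hbc.1))

lemma reachable_to_reachOn {G : SimpleGraph V} {S : Set V} {x y : ↥S}
    (h : (G.induce S).Reachable x y) : reachOn' G S ↑x ↑y := by
  obtain ⟨w⟩ := h
  induction w with
  | nil => exact Relation.ReflTransGen.refl
  | @cons p q r h w ih =>
    exact Relation.ReflTransGen.head ⟨h, p.2, q.2⟩ ih

/-! ### base case : `A(G) = ∅` -/

lemma Dset_closed_of_A_empty {G : SimpleGraph V} (hA : Aset G = ∅) :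
    ∀ d ∈ Dset G, ∀ y, G.Adj d y → y ∈ Dset G := by
  intro d hd y hadj
  by_contra hy
  have : y ∈ Aset G := ⟨hy, d, hd, hadj.symm⟩
  rw [hA] at this
  exact this

lemma base_case {G : SimpleGraph V} (hA : Aset G = ∅) :
    Nat.card (G.induce (Dset G)).ConnectedComponent + 2 * gnu G
      = (Aset G).ncard + Fintype.card V := by
  classical
  rw [hA, Set.ncard_empty]
  obtain ⟨M, hM, hMc⟩ := gnu_spec G
  set E := Finset.univ.filter (fun z : V => z ∉ fcov M) with hEdef
  have hEcard : E.card + 2 * gnu G = Fintype.card V := by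
    have h1 : E = Finset.univ \ fcov M := by
      ext z; simp [hEdef, Finset.mem_sdiff]
    have h2 := card_fcov hM
    have h3 : (fcov M) ⊆ Finset.univ := Finset.subset_univ _
    have h4 := Finset.card_sdiff_of_subset h3
    have h5 := Finset.card_le_card h3
    have h6 : (Finset.univ : Finset V).card = Fintype.card V := Finset.card_univ
    rw [h1, h4, h2, hMc]
    omega
  have hED : ∀ z ∈ E, z ∈ Dset G := by
    intro z hz
    rw [hEdef, Finset.mem_filter] at hz
    exact mem_Dset_iff.2 ⟨M, hM, hMc, hz.2⟩
  -- the map from exposed vertices to connected components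
  let ψ : ↥(E : Finset V) → (G.induce (Dset G)).ConnectedComponent := fun z =>
    (G.induce (Dset G)).connectedComponentMk ⟨z.1, hED z.1 z.2⟩
  have hinj : Function.Injective ψ := by
    intro z w hzw
    have hr : reachOn' G (Dset G) ↑z ↑w :=
      reachable_to_reachOn ((SimpleGraph.ConnectedComponent.eq).1 hzw)
    by_contra hne
    have hz' := Finset.mem_filter.1 z.2
    have hw' := Finset.mem_filter.1 w.2
    exact key1 hM hMc hz'.2 hw'.2 (fun h => hne (Subtype.ext h)) hr
  have hsurj : Function.Surjective ψ := by
    intro c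
    obtain ⟨x, rfl⟩ := c.exists_rep
    -- x : subtype of Dset G
    have hxD : (x : V) ∈ Dset G := x.2
    obtain ⟨N, hN, hNc, hxN⟩ := mem_Dset_iff.1 hxD
    set K := Finset.univ.filter (fun z : V => z ∈ Dset G ∧ reachOn' G (Dset G) ↑x z) with hKdef
    have hmemK : ∀ z, z ∈ K ↔ z ∈ Dset G ∧ reachOn' G (Dset G) (↑x) z := by
      intro z; simp [hKdef]
    have hxK : (x : V) ∈ K := (hmemK _).2 ⟨hxD, Relation.ReflTransGen.refl⟩
    -- edges touching K stay in K
    have hKstep : ∀ z ∈ K, ∀ w, G.Adj z w → w ∈ K := by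
      intro z hz w hadj
      rw [hmemK] at hz ⊢
      have hwD : w ∈ Dset G := Dset_closed_of_A_empty hA z hz.1 w hadj
      exact ⟨hwD, hz.2.tail ⟨hadj, hz.1, hwD⟩⟩
    have hKedge : ∀ (P : Finset (Sym2 V)), IsGMatching G P →
        ∀ e ∈ P, ∀ z, z ∈ e → z ∈ K → ∀ w, w ∈ e → w ∈ K := by
      intro P hP e heP z hze hzK w hwe
      by_cases hzw : w = z
      · exact hzw ▸ hzK
      · have hediag : ¬ e.IsDiag := edge_not_diag (hP.1 e heP)
        have hspec := Sym2.other_spec hze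
        have : w = Sym2.Mem.other hze := by
          rw [← hspec] at hwe
          rcases Sym2.mem_iff.1 hwe with h | h
          · exact absurd h hzw
          · exact h
        subst this
        have hadj : G.Adj z (Sym2.Mem.other hze) := by
          have := hP.1 e heP
          rw [← hspec] at this
          exact this
        exact hKstep z hzK _ hadj
    -- N restricted to K covers K minus x
    set NK := N.filter (fun e => ∃ z, z ∈ e ∧ z ∈ K) with hNKdef
    have hNKsub : NK ⊆ N := Finset.filter_subset _ _
    have hNKmatch : IsGMatching G NK := matching_subset hN hNKsub
    have hfcovNK : fcov NK = K.erase (↑x) := by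
      ext z
      rw [mem_fcov]
      constructor
      · rintro ⟨e, he, hze⟩
        obtain ⟨heN, w, hwe, hwK⟩ := Finset.mem_filter.1 he
        have hzK : z ∈ K := hKedge N hN e heN w hwe hwK z hze
        refine Finset.mem_erase.2 ⟨?_, hzK⟩
        intro h
        exact hxN (mem_fcov.2 ⟨e, hNKsub he, h ▸ hze⟩)
      · intro hz
        obtain ⟨hzx, hzK⟩ := Finset.mem_erase.1 hz
        have hzD := ((hmemK z).1 hzK).1
        have hzr := ((hmemK z).1 hzK).2
        have hzN : z ∈ fcov N := by
          by_contra hzN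
          exact key1 hN hNc hxN hzN (fun h => hzx h.symm) hzr
        obtain ⟨e, heN, hze⟩ := mem_fcov.1 hzN
        exact ⟨e, Finset.mem_filter.2 ⟨heN, z, hze, hzK⟩, hze⟩
    have hKodd : K.card = 2 * NK.card + 1 := by
      have h1 := card_fcov hNKmatch
      rw [hfcovNK, Finset.card_erase_of_mem hxK] at h1
      have : 0 < K.card := Finset.card_pos.2 ⟨_, hxK⟩
      omega
    -- M restricted to K
    set MK := M.filter (fun e => ∃ z, z ∈ e ∧ z ∈ K) with hMKdef
    have hMKsub : MK ⊆ M := Finset.filter_subset _ _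
    have hMKmatch : IsGMatching G MK := matching_subset hM hMKsub
    -- some vertex of K is M-exposed
    have hexp : ∃ z ∈ K, z ∉ fcov M := by
      by_contra hcon
      push_neg at hcon
      have hfcovMK : fcov MK = K := by
        ext z
        rw [mem_fcov]
        constructor
        · rintro ⟨e, he, hze⟩
          obtain ⟨heM, w, hwe, hwK⟩ := Finset.mem_filter.1 he
          exact hKedge M hM e heM w hwe hwK z hze
        · intro hzK
          obtain ⟨e, heM, hze⟩ := mem_fcov.1 (hcon z hzK)
          exact ⟨e, Finset.mem_filter.2 ⟨heM, z, hze, hzK⟩, hze⟩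
      have h1 := card_fcov hMKmatch
      rw [hfcovMK] at h1
      omega
    obtain ⟨z, hzK, hzE⟩ := hexp
    refine ⟨⟨z, Finset.mem_filter.2 ⟨Finset.mem_univ z, hzE⟩⟩, ?_⟩
    show (G.induce (Dset G)).connectedComponentMk _ = (G.induce (Dset G)).connectedComponentMk x
    apply (SimpleGraph.ConnectedComponent.eq).2
    have hzD := ((hmemK z).1 hzK).1
    have hzr := ((hmemK z).1 hzK).2
    exact ((reachOn_to_reachable hzr x.2 hzD).symm).mono (by exact fun a b h => h) |>.mono (fun a b h => h)
  have hbij : Function.Bijective ψ := ⟨hinj, hsurj⟩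
  have hcardcc : Nat.card (G.induce (Dset G)).ConnectedComponent = E.card := by
    rw [← Nat.card_congr (Equiv.ofBijective ψ hbij)]
    simp [Nat.card_eq_fintype_card]
  omega

/-! ### assembly -/

lemma GE_aux : ∀ (n : ℕ) (G : SimpleGraph V), (Aset G).ncard = n →
    Nat.card ((G.induce (Dset G)).ConnectedComponent) + 2 * gnu G
      = (Aset G).ncard + Fintype.card V := by
  intro n
  induction n using Nat.strong_induction_on with
  | _ n ih =>
    intro G hn
    by_cases hA : Aset G = ∅
    · exact base_case hA
    · obtain ⟨a, ha⟩ := Set.nonempty_iff_ne_empty.2 hA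
      have hA' := Aset_delV ha
      have hDa := Dset_delV ha
      have hgnu := gnu_delV_of_mem_A ha
      have hfin : (Aset G).Finite := Set.toFinite _
      have hncard : (Aset (delV G a)).ncard + 1 = (Aset G).ncard := by
        rw [hA']
        exact Set.ncard_diff_singleton_add_one ha hfin
      have hlt : (Aset (delV G a)).ncard < n := by omega
      have hIH := ih _ hlt (delV G a) rfl
      rw [hDa, card_cc_delV ha.1] at hIH
      omega

/-- Gallai–Edmonds: the number `r` of connected components of `G[D]` satisfies
`r = |A| + |V| - 2ν(G)`, stated additively as `r + 2ν(G) = |A| + |V|`. -/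
theorem GE_component_count {V : Type} [Fintype V] [DecidableEq V] (G : SimpleGraph V) :
    Nat.card ((G.induce (Dset G)).ConnectedComponent) + 2 * gnu G
      = (Aset G).ncard + Fintype.card V := by
  exact GE_aux ((Aset G).ncard) G rfl
end

section
/- Let K be a simplicial complex such that for every non-empty face σ ∈ K, the link lk_K(σ) has vanishing reduced homology in all dimensions ≥ d₀. Then K itself has vanishing reduced homology in all dimensions ≥ d₀ + 1. -/
attribute [local instance] Classical.propDecidable

variable {W : Type} [LinearOrder W] (F : Type) [Field F]

/-- The simplicial boundary operator on formal `F`-linear combinations of finite sets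
(faces `s` of cardinality `n` being generators in degree `n`; the empty face is the
generator of the augmentation degree, so this computes *reduced* homology). -/
noncomputable def bdry (x : Finset W →₀ F) : Finset W →₀ F :=
  x.sum fun s a =>
    ∑ v ∈ s, (a * (-1 : F) ^ (s.filter fun w => w < v).card) • Finsupp.single (s.erase v) (1 : F)

/-- `K` is an (abstract, finite) simplicial complex: a hereditary family of finite sets. -/
def IsComplex (K : Finset (Finset W)) : Prop := ∀ s ∈ K, ∀ t ⊆ s, t ∈ K

/-- The reduced homology (with coefficients in `F`) of the complex `K` vanishes in
dimension `d`: every reduced `d`-cycle of `K` is a boundary of a `(d+1)`-chain of `K`.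
(A face of dimension `d` has cardinality `d + 1`.) -/
def VanishesAt (K : Finset (Finset W)) (d : ℕ) : Prop :=
  ∀ x : Finset W →₀ F, (∀ s ∈ x.support, s ∈ K ∧ s.card = d + 1) → bdry F x = 0 →
    ∃ y : Finset W →₀ F, (∀ s ∈ y.support, s ∈ K ∧ s.card = d + 2) ∧ bdry F y = x

/-- The link of a face `σ` in the complex `K`. -/
noncomputable def linkOf (K : Finset (Finset W)) (σ : Finset W) : Finset (Finset W) :=
  K.filter fun τ => Disjoint τ σ ∧ τ ∪ σ ∈ K

/-! ### Auxiliary infrastructure -/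

/-- The boundary of a single face, as a chain. -/
noncomputable def dD (s : Finset W) : Finset W →₀ F :=
  ∑ v ∈ s, ((-1 : F) ^ (s.filter fun w => w < v).card) • Finsupp.single (s.erase v) (1 : F)

lemma bdry_eq (x : Finset W →₀ F) : bdry F x = x.sum fun s a => a • dD F s := by
  unfold bdry dD
  refine Finsupp.sum_congr fun s _ => ?_
  rw [Finset.smul_sum]
  exact Finset.sum_congr rfl fun v _ => (smul_smul _ _ _).symm

lemma bdry_eq_lc (x : Finset W →₀ F) :
    bdry F x = Finsupp.linearCombination F (dD F) x := by
  rw [bdry_eq, Finsupp.linearCombination_apply]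

lemma bdry_zero : bdry F (0 : Finset W →₀ F) = 0 := by
  rw [bdry_eq_lc]; simp

lemma bdry_add (x y : Finset W →₀ F) : bdry F (x + y) = bdry F x + bdry F y := by
  simp only [bdry_eq_lc, map_add]

lemma bdry_sub (x y : Finset W →₀ F) : bdry F (x - y) = bdry F x - bdry F y := by
  simp only [bdry_eq_lc, map_sub]

lemma bdry_single (s : Finset W) (a : F) :
    bdry F (Finsupp.single s a) =
      ∑ v ∈ s, (a * (-1 : F) ^ (s.filter fun w => w < v).card) •
        Finsupp.single (s.erase v) (1 : F) := by
  unfold bdry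
  rw [Finsupp.sum_single_index]
  simp

lemma bdry_support (x : Finset W →₀ F) :
    ∀ r ∈ (bdry F x).support, ∃ s ∈ x.support, ∃ u ∈ s, r = s.erase u := by
  intro r hr
  unfold bdry at hr
  obtain ⟨s, hs, hr2⟩ := Finset.mem_biUnion.1 (Finsupp.support_sum hr)
  refine ⟨s, hs, ?_⟩
  obtain ⟨u, hu, hr3⟩ := Finsupp.mem_support_finset_sum r hr2
  refine ⟨u, hu, ?_⟩
  have := Finsupp.support_smul hr3
  have := Finsupp.support_single_subset this
  simpa using this

/-- The cone operator: insert a vertex into every face. -/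
noncomputable def cone (v : W) (x : Finset W →₀ F) : Finset W →₀ F :=
  Finsupp.mapDomain (insert v) x

lemma cone_zero (v : W) : cone F v (0 : Finset W →₀ F) = 0 := Finsupp.mapDomain_zero

lemma cone_add (v : W) (x y : Finset W →₀ F) :
    cone F v (x + y) = cone F v x + cone F v y := Finsupp.mapDomain_add

lemma cone_single (v : W) (s : Finset W) (a : F) :
    cone F v (Finsupp.single s a) = Finsupp.single (insert v s) a := Finsupp.mapDomain_single

lemma cone_support (v : W) (x : Finset W →₀ F) :
    ∀ r ∈ (cone F v x).support, ∃ s ∈ x.support, r = insert v s := by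
  intro r hr
  have := Finsupp.mapDomain_support hr
  obtain ⟨s, hs, hrs⟩ := Finset.mem_image.1 this
  exact ⟨s, hs, hrs.symm⟩

lemma bdry_cone_single (v : W) (t : Finset W) (a : F) (hvt : ∀ w ∈ t, v < w) :
    bdry F (cone F v (Finsupp.single t a)) =
      Finsupp.single t a - cone F v (bdry F (Finsupp.single t a)) := by
  have hv : v ∉ t := fun h => lt_irrefl v (hvt v h)
  rw [cone_single, bdry_single, bdry_single, Finset.sum_insert hv]
  have h0 : ((insert v t).filter fun w => w < v) = ∅ := by
    rw [Finset.filter_eq_empty_iff]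
    intro w hw
    rcases Finset.mem_insert.1 hw with h | h
    · simp [h]
    · exact not_lt.2 (le_of_lt (hvt w h))
  rw [h0, Finset.erase_insert hv]
  have hmap : cone F v (∑ u ∈ t,
      (a * (-1 : F) ^ (t.filter fun w => w < u).card) • Finsupp.single (t.erase u) (1 : F)) =
      ∑ u ∈ t, (a * (-1 : F) ^ (t.filter fun w => w < u).card) •
        Finsupp.single (insert v (t.erase u)) (1 : F) := by
    unfold cone
    rw [show (Finsupp.mapDomain (insert v) : (Finset W →₀ F) → (Finset W →₀ F)) =
      ⇑(Finsupp.mapDomain.addMonoidHom (insert v)) from rfl, map_sum]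
    refine Finset.sum_congr rfl fun u hu => ?_
    rw [Finsupp.mapDomain.addMonoidHom_apply, Finsupp.mapDomain_smul, Finsupp.mapDomain_single]
  rw [hmap]
  have hterm : ∀ u ∈ t,
      (a * (-1 : F) ^ ((insert v t).filter fun w => w < u).card) •
        Finsupp.single ((insert v t).erase u) (1 : F) =
      -((a * (-1 : F) ^ (t.filter fun w => w < u).card) •
        Finsupp.single (insert v (t.erase u)) (1 : F)) := by
    intro u hu
    have hvu : v < u := hvt u hu
    have hne : v ≠ u := ne_of_lt hvu
    have hfil : ((insert v t).filter fun w => w < u) = insert v (t.filter fun w => w < u) := by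
      rw [Finset.filter_insert, if_pos hvu]
    have hvnot : v ∉ t.filter fun w => w < u := fun h => hv (Finset.mem_of_mem_filter v h)
    rw [hfil, Finset.card_insert_of_notMem hvnot, Finset.erase_insert_of_ne hne]
    have hcoef : a * (-1 : F) ^ ((t.filter fun w => w < u).card + 1) =
        -(a * (-1 : F) ^ (t.filter fun w => w < u).card) := by
      rw [pow_succ]; ring
    rw [hcoef, neg_smul]
  rw [Finset.sum_congr rfl hterm, Finset.sum_neg_distrib, sub_eq_add_neg]
  simp

lemma bdry_cone (v : W) (γ : Finset W →₀ F) (hγ : ∀ s ∈ γ.support, ∀ w ∈ s, v < w) :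
    bdry F (cone F v γ) = γ - cone F v (bdry F γ) := by
  induction γ using Finsupp.induction with
  | zero => simp [cone_zero, bdry_zero]
  | single_add t a f hat ha ih =>
    have hta : (Finsupp.single t a + f) t = a := by
      rw [Finsupp.add_apply, Finsupp.single_eq_same, Finsupp.notMem_support_iff.1 hat, add_zero]
    have htmem : t ∈ (Finsupp.single t a + f).support := by
      rw [Finsupp.mem_support_iff, hta]; exact ha
    have hfmem : ∀ s ∈ f.support, s ∈ (Finsupp.single t a + f).support := by
      intro s hs
      have hst : s ≠ t := fun h => hat (h ▸ hs)
      rw [Finsupp.mem_support_iff, Finsupp.add_apply, Finsupp.single_eq_of_ne hst,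
        zero_add]
      exact Finsupp.mem_support_iff.1 hs
    have ih' := ih (fun s hs => hγ s (hfmem s hs))
    have ht' := hγ t htmem
    rw [cone_add, bdry_add, bdry_cone_single F v t a ht', ih', bdry_add, cone_add]
    abel

lemma cone_decone (v : W) (x : Finset W →₀ F) (hx : ∀ s ∈ x.support, v ∈ s) :
    cone F v (Finsupp.mapDomain (fun s => Finset.erase s v) x) = x := by
  unfold cone
  rw [← Finsupp.mapDomain_comp]
  rw [Finsupp.mapDomain_congr (g := id) fun s hs => by
    simp only [Function.comp_apply, id_eq]; exact Finset.insert_erase (hx s hs)]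
  exact Finsupp.mapDomain_id

lemma cone_eq_zero (v : W) (x : Finset W →₀ F) (hx : ∀ s ∈ x.support, v ∉ s)
    (h : cone F v x = 0) : x = 0 := by
  have := congrArg (Finsupp.mapDomain (fun s => Finset.erase s v)) h
  rw [cone, ← Finsupp.mapDomain_comp] at this
  rw [Finsupp.mapDomain_congr (g := id) fun s hs => by
    simp only [Function.comp_apply, id_eq]; exact Finset.erase_insert (hx s hs)] at this
  rwa [Finsupp.mapDomain_id, Finsupp.mapDomain_zero] at this

lemma split_zero (v : W) {x y : Finset W →₀ F} (hx : ∀ s ∈ x.support, v ∉ s)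
    (hy : ∀ s ∈ y.support, v ∈ s) (h : x + y = 0) : x = 0 ∧ y = 0 := by
  have hyy : y = 0 := by
    ext s
    by_cases hv : v ∈ s
    · have hxs : x s = 0 := by
        by_contra hc
        exact hx s (Finsupp.mem_support_iff.2 hc) hv
      have : x s + y s = 0 := by
        rw [← Finsupp.add_apply, h]; rfl
      rw [hxs, zero_add] at this
      simpa using this
    · by_contra hc
      exact hv (hy s (Finsupp.mem_support_iff.2 (by simpa using hc)))
  constructor
  · rw [hyy, add_zero] at h; exact h
  · exact hyy

/-- A complex with no faces of positive cardinality (vacuously) vanishes. -/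
lemma vanishes_of_no_faces (K : Finset (Finset W)) (d : ℕ)
    (hK : ∀ s ∈ K, ¬ s.card = d + 1) : VanishesAt F K d := by
  intro x hx _
  have : x.support = ∅ := by
    rw [Finset.eq_empty_iff_forall_notMem]
    intro s hs
    exact hK s (hx s hs).1 (hx s hs).2
  have hx0 : x = 0 := Finsupp.support_eq_empty.1 this
  exact ⟨0, by simp, by rw [bdry_zero, hx0]⟩

/-- Antistar lemma: if `X` vanishes at `d` and the link of `v` in `X` vanishes at `d`,
then the antistar of `v` vanishes at `d`.  Here `v` must be `≤` all vertices of `X`. -/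
lemma astar_vanishes (X : Finset (Finset W)) (hX : IsComplex X) (v : W)
    (hv : ∀ s ∈ X, ∀ w ∈ s, v ≤ w) (d : ℕ)
    (h1 : VanishesAt F X d) (h2 : VanishesAt F (linkOf X {v}) d) :
    VanishesAt F (X.filter fun s => v ∉ s) d := by
  intro x hx hbx
  obtain ⟨y, hy, hby⟩ := h1 x
    (fun s hs => ⟨(Finset.mem_filter.1 (hx s hs).1).1, (hx s hs).2⟩) hbx
  have hxv : ∀ s ∈ x.support, v ∉ s := fun s hs => (Finset.mem_filter.1 (hx s hs).1).2
  -- decompose y into the part containing v and the part not containing v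
  set y' := y.filter (fun s => v ∉ s) with hy'def
  set yv := y.filter (fun s => ¬ v ∉ s) with hyvdef
  have hsum : y' + yv = y := Finsupp.filter_pos_add_filter_neg y _
  have hy'supp : ∀ s ∈ y'.support, s ∈ y.support ∧ v ∉ s := by
    intro s hs
    rw [hy'def, Finsupp.support_filter, Finset.mem_filter] at hs
    exact hs
  have hyvsupp : ∀ s ∈ yv.support, s ∈ y.support ∧ v ∈ s := by
    intro s hs
    rw [hyvdef, Finsupp.support_filter, Finset.mem_filter] at hs
    exact ⟨hs.1, not_not.1 hs.2⟩
  set γ := Finsupp.mapDomain (fun s => Finset.erase s v) yv with hγdef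
  have hcone : cone F v γ = yv := cone_decone F v yv (fun s hs => (hyvsupp s hs).2)
  have hγsupp : ∀ r ∈ γ.support, ∃ s ∈ yv.support, r = s.erase v := by
    intro r hr
    rw [hγdef] at hr
    obtain ⟨s, hs, hrs⟩ := Finset.mem_image.1 (Finsupp.mapDomain_support hr)
    exact ⟨s, hs, hrs.symm⟩
  have hγlink : ∀ r ∈ γ.support, r ∈ linkOf X {v} ∧ r.card = d + 1 := by
    intro r hr
    obtain ⟨s, hs, hrs⟩ := hγsupp r hr
    obtain ⟨hsy, hsv⟩ := hyvsupp s hs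
    obtain ⟨hsX, hscard⟩ := hy s hsy
    subst hrs
    constructor
    · rw [linkOf, Finset.mem_filter]
      refine ⟨hX s hsX _ (Finset.erase_subset v s), ?_, ?_⟩
      · simp [Finset.disjoint_singleton_right]
      · rw [Finset.union_comm, ← Finset.insert_eq, Finset.insert_erase hsv]
        exact hsX
    · rw [Finset.card_erase_of_mem hsv, hscard]
      omega
  have hγnotv : ∀ r ∈ γ.support, v ∉ r := by
    intro r hr
    obtain ⟨s, _, hrs⟩ := hγsupp r hr
    subst hrs
    exact Finset.notMem_erase v s
  have hγgt : ∀ r ∈ γ.support, ∀ w ∈ r, v < w := by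
    intro r hr w hw
    obtain ⟨s, hs, hrs⟩ := hγsupp r hr
    have hsX : s ∈ X := (hy s (hyvsupp s hs).1).1
    subst hrs
    have hwv : w ≠ v := Finset.ne_of_mem_erase hw
    exact lt_of_le_of_ne (hv s hsX w (Finset.mem_of_mem_erase hw)) (Ne.symm hwv)
  -- bdry y = bdry y' + γ - cone (bdry γ) = x
  have hbdryy : bdry F y' + γ - cone F v (bdry F γ) = x := by
    rw [← hby, ← hsum, bdry_add, ← hcone, bdry_cone F v γ hγgt]
    abel
  -- split into v-free and v-containing parts
  have hbps : ∀ r ∈ (bdry F y').support, v ∉ r := by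
    intro r hr
    obtain ⟨s, hs, u, hu, hrs⟩ := bdry_support F y' r hr
    subst hrs
    intro hvr
    exact (hy'supp s hs).2 (Finset.mem_of_mem_erase hvr)
  have hbγ : ∀ r ∈ (bdry F γ).support, v ∉ r := by
    intro r hr
    obtain ⟨s, hs, u, hu, hrs⟩ := bdry_support F γ r hr
    subst hrs
    intro hvr
    exact hγnotv s hs (Finset.mem_of_mem_erase hvr)
  have hsplit := split_zero F v
    (x := bdry F y' + γ - x) (y := -(cone F v (bdry F γ)))
    (by
      intro s hs
      have : s ∈ (bdry F y').support ∪ (γ.support ∪ x.support) := by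
        have h1 : (bdry F y' + γ - x).support ⊆
            (bdry F y' + γ).support ∪ x.support := Finsupp.support_sub
        have h2 : (bdry F y' + γ).support ⊆ (bdry F y').support ∪ γ.support :=
          Finsupp.support_add
        rcases Finset.mem_union.1 (h1 hs) with h | h
        · rcases Finset.mem_union.1 (h2 h) with h' | h'
          · exact Finset.mem_union_left _ h'
          · exact Finset.mem_union_right _ (Finset.mem_union_left _ h')
        · exact Finset.mem_union_right _ (Finset.mem_union_right _ h)
      rcases Finset.mem_union.1 this with h | h
      · exact hbps s h
      · rcases Finset.mem_union.1 h with h' | h'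
        · exact hγnotv s h'
        · exact hxv s h'
      )
    (by
      intro s hs
      rw [Finsupp.support_neg] at hs
      obtain ⟨r, _, hrs⟩ := cone_support F v (bdry F γ) s hs
      subst hrs
      exact Finset.mem_insert_self v r)
    (by rw [← hbdryy]; abel)
  have hbγ0 : bdry F γ = 0 := by
    have := hsplit.2
    rw [neg_eq_zero] at this
    exact cone_eq_zero F v _ hbγ this
  have hby' : bdry F y' = x - γ := by
    have h0 := hsplit.1
    rw [sub_eq_zero] at h0
    exact eq_sub_of_add_eq h0
  obtain ⟨δ, hδ, hbδ⟩ := h2 γ hγlink hbγ0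
  refine ⟨y' + δ, ?_, ?_⟩
  · intro s hs
    rcases Finset.mem_union.1 (Finsupp.support_add hs) with h | h
    · obtain ⟨hsy, hsv⟩ := hy'supp s h
      exact ⟨Finset.mem_filter.2 ⟨(hy s hsy).1, hsv⟩, (hy s hsy).2⟩
    · obtain ⟨hslink, hscard⟩ := hδ s h
      obtain ⟨hsX, hdisj, _⟩ := Finset.mem_filter.1 hslink
      refine ⟨Finset.mem_filter.2 ⟨hsX, ?_⟩, hscard⟩
      rw [Finset.disjoint_singleton_right] at hdisj
      exact hdisj
  · rw [bdry_add, hby', hbδ, sub_add_cancel]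

/-- Main induction: on the number of faces of `K`. -/
lemma main_aux : ∀ n : ℕ, ∀ K : Finset (Finset W), K.card ≤ n →
    IsComplex K → ∀ d₀ : ℕ,
    (∀ σ ∈ K, σ ≠ ∅ → ∀ d, d₀ ≤ d → VanishesAt F (linkOf K σ) d) →
    ∀ d, d₀ + 1 ≤ d → VanishesAt F K d := by
  intro n
  induction n with
  | zero =>
    intro K hcard hK d₀ h d hd
    refine vanishes_of_no_faces F K d fun s hs hsc => ?_
    rw [Finset.card_eq_zero.1 (Nat.le_zero.1 hcard)] at hs
    exact absurd hs (Finset.notMem_empty s)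
  | succ n ih =>
    intro K hcard hK d₀ h d hd
    set V := K.biUnion id with hVdef
    by_cases hV : V = ∅
    · refine vanishes_of_no_faces F K d fun s hs hsc => ?_
      have hne : s.Nonempty := Finset.card_pos.1 (by omega)
      obtain ⟨w, hw⟩ := hne
      have hmem : w ∈ V := Finset.mem_biUnion.2 ⟨s, hs, hw⟩
      rw [hV] at hmem
      exact absurd hmem (Finset.notMem_empty w)
    · have hVne : V.Nonempty := Finset.nonempty_of_ne_empty hV
      set v := V.min' hVne with hvdef
      have hvV : v ∈ V := V.min'_mem hVne
      have hv : ∀ s ∈ K, ∀ w ∈ s, v ≤ w := by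
        intro s hs w hw
        exact V.min'_le w (Finset.mem_biUnion.2 ⟨s, hs, hw⟩)
      have hvK : {v} ∈ K := by
        obtain ⟨s, hs, hvs⟩ := Finset.mem_biUnion.1 hvV
        exact hK s hs {v} (Finset.singleton_subset_iff.2 hvs)
      set B := K.filter (fun s => v ∉ s) with hBdef
      have hBmem : ∀ s, s ∈ B ↔ s ∈ K ∧ v ∉ s := fun s => Finset.mem_filter
      have hBK : IsComplex B := by
        intro s hs t hts
        obtain ⟨hsK, hsv⟩ := (hBmem s).1 hs
        exact (hBmem t).2 ⟨hK s hsK t hts, fun hvt => hsv (hts hvt)⟩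
      have hBcard : B.card ≤ n := by
        have hss : B ⊂ K := by
          obtain ⟨s, hs, hvs⟩ := Finset.mem_biUnion.1 hvV
          refine Finset.ssubset_iff_of_subset (Finset.filter_subset _ _) |>.2 ⟨s, hs, ?_⟩
          rw [hBmem]
          tauto
        have := Finset.card_lt_card hss
        omega
      -- the links of B satisfy the hypothesis
      have hBlinks : ∀ σ ∈ B, σ ≠ ∅ → ∀ d', d₀ ≤ d' → VanishesAt F (linkOf B σ) d' := by
        intro σ hσ hσne d' hd'
        obtain ⟨hσK, hσv⟩ := (hBmem σ).1 hσ
        have hlinkcomplex : IsComplex (linkOf K σ) := by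
          intro s hs t hts
          obtain ⟨hsK, hdisj, hsu⟩ := Finset.mem_filter.1 hs
          refine Finset.mem_filter.2 ⟨hK s hsK t hts, Finset.disjoint_of_subset_left hts hdisj,
            hK _ hsu _ (Finset.union_subset_union_left hts)⟩
        have hlinkv : ∀ s ∈ linkOf K σ, ∀ w ∈ s, v ≤ w := by
          intro s hs w hw
          exact hv s (Finset.mem_filter.1 hs).1 w hw
        have heq : linkOf B σ = (linkOf K σ).filter (fun τ => v ∉ τ) := by
          ext τ
          simp only [linkOf, Finset.mem_filter, hBmem]
          constructor
          · rintro ⟨⟨hτK, hτv⟩, hdisj, hτσK, _⟩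
            exact ⟨⟨hτK, hdisj, hτσK⟩, hτv⟩
          · rintro ⟨⟨hτK, hdisj, hτσK⟩, hτv⟩
            refine ⟨⟨hτK, hτv⟩, hdisj, hτσK, ?_⟩
            intro hvτσ
            rcases Finset.mem_union.1 hvτσ with h' | h'
            · exact hτv h'
            · exact hσv h'
        rw [heq]
        refine astar_vanishes F (linkOf K σ) hlinkcomplex v hlinkv d' (h σ hσK hσne d' hd') ?_
        set σ' := insert v σ with hσ'def
        have heq2 : linkOf (linkOf K σ) {v} = linkOf K σ' := by
          ext τ
          simp only [linkOf, Finset.mem_filter]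
          constructor
          · rintro ⟨⟨hτK, hτσdisj, hτσK⟩, hτvdisj, ⟨hτvK, hτvσdisj, hτvσK⟩⟩
            have hvτ : v ∉ τ := by
              rw [Finset.disjoint_singleton_right] at hτvdisj
              exact hτvdisj
            refine ⟨hτK, ?_, ?_⟩
            · rw [hσ'def, Finset.disjoint_insert_right]
              exact ⟨hvτ, hτσdisj⟩
            · have huni : τ ∪ σ' = τ ∪ {v} ∪ σ := by
                rw [hσ'def, Finset.union_assoc, ← Finset.insert_eq]
              rw [huni]
              exact hτvσK
          · rintro ⟨hτK, hdisj, hτuK⟩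
            rw [hσ'def, Finset.disjoint_insert_right] at hdisj
            obtain ⟨hvτ, hτσdisj⟩ := hdisj
            have hτσsub : τ ∪ σ ⊆ τ ∪ σ' := by
              rw [hσ'def]
              exact Finset.union_subset_union_right (Finset.subset_insert v σ)
            have hτvsub : τ ∪ {v} ⊆ τ ∪ σ' := by
              refine Finset.union_subset Finset.subset_union_left ?_
              rw [hσ'def]
              intro w hw
              rw [Finset.mem_singleton] at hw
              subst hw
              exact Finset.mem_union_right _ (Finset.mem_insert_self v σ)
            have hτvσ : τ ∪ {v} ∪ σ = τ ∪ σ' := by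
              rw [hσ'def, Finset.union_assoc, ← Finset.insert_eq]
            refine ⟨⟨hτK, hτσdisj, hK _ hτuK _ hτσsub⟩,
              Finset.disjoint_singleton_right.2 hvτ,
              hK _ hτuK _ hτvsub, ?_, ?_⟩
            · rw [Finset.disjoint_union_left]
              refine ⟨hτσdisj, ?_⟩
              rw [Finset.disjoint_singleton_left]
              exact hσv
            · rw [hτvσ]
              exact hτuK
        rw [heq2]
        by_cases hins : σ' ∈ K
        · refine h σ' hins ?_ d' hd'
          rw [hσ'def]
          exact Finset.nonempty_iff_ne_empty.1 (Finset.insert_nonempty v σ)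
        · refine vanishes_of_no_faces F _ d' fun s hs _ => ?_
          exfalso
          simp only [linkOf, Finset.mem_filter] at hs
          exact hins (hK _ hs.2.2 _ Finset.subset_union_right)
      -- the chain-level argument
      intro x hx hbx
      set β := x.filter (fun s => v ∉ s) with hβdef
      set xv := x.filter (fun s => ¬ v ∉ s) with hxvdef
      have hsumx : β + xv = x := Finsupp.filter_pos_add_filter_neg x _
      have hβsupp : ∀ s ∈ β.support, s ∈ x.support ∧ v ∉ s := by
        intro s hs
        rw [hβdef, Finsupp.support_filter, Finset.mem_filter] at hs
        exact hs
      have hxvsupp : ∀ s ∈ xv.support, s ∈ x.support ∧ v ∈ s := by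
        intro s hs
        rw [hxvdef, Finsupp.support_filter, Finset.mem_filter] at hs
        exact ⟨hs.1, not_not.1 hs.2⟩
      set α := Finsupp.mapDomain (fun s => Finset.erase s v) xv with hαdef
      have hconeα : cone F v α = xv := cone_decone F v xv (fun s hs => (hxvsupp s hs).2)
      have hαsupp : ∀ r ∈ α.support, ∃ s ∈ xv.support, r = s.erase v := by
        intro r hr
        rw [hαdef] at hr
        obtain ⟨s, hs, hrs⟩ := Finset.mem_image.1 (Finsupp.mapDomain_support hr)
        exact ⟨s, hs, hrs.symm⟩
      have hαlink : ∀ r ∈ α.support, r ∈ linkOf K {v} ∧ r.card = d := by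
        intro r hr
        obtain ⟨s, hs, hrs⟩ := hαsupp r hr
        obtain ⟨hsx, hsv⟩ := hxvsupp s hs
        obtain ⟨hsK, hscard⟩ := hx s hsx
        subst hrs
        constructor
        · rw [linkOf, Finset.mem_filter]
          refine ⟨hK s hsK _ (Finset.erase_subset v s), ?_, ?_⟩
          · simp [Finset.disjoint_singleton_right]
          · rw [Finset.union_comm, ← Finset.insert_eq, Finset.insert_erase hsv]
            exact hsK
        · rw [Finset.card_erase_of_mem hsv, hscard]
          omega
      have hαnotv : ∀ r ∈ α.support, v ∉ r := by
        intro r hr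
        obtain ⟨s, _, hrs⟩ := hαsupp r hr
        subst hrs
        exact Finset.notMem_erase v s
      have hαgt : ∀ r ∈ α.support, ∀ w ∈ r, v < w := by
        intro r hr w hw
        obtain ⟨s, hs, hrs⟩ := hαsupp r hr
        have hsK : s ∈ K := (hx s (hxvsupp s hs).1).1
        subst hrs
        exact lt_of_le_of_ne (hv s hsK w (Finset.mem_of_mem_erase hw))
          (Ne.symm (Finset.ne_of_mem_erase hw))
      have hbdryx : bdry F β + α - cone F v (bdry F α) = 0 := by
        rw [← hbx, ← hsumx, bdry_add, ← hconeα, bdry_cone F v α hαgt]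
        abel
      have hbβsupp : ∀ r ∈ (bdry F β).support, v ∉ r := by
        intro r hr
        obtain ⟨s, hs, u, hu, hrs⟩ := bdry_support F β r hr
        subst hrs
        exact fun hvr => (hβsupp s hs).2 (Finset.mem_of_mem_erase hvr)
      have hbαsupp : ∀ r ∈ (bdry F α).support, v ∉ r := by
        intro r hr
        obtain ⟨s, hs, u, hu, hrs⟩ := bdry_support F α r hr
        subst hrs
        exact fun hvr => hαnotv s hs (Finset.mem_of_mem_erase hvr)
      have hsplit := split_zero F v (x := bdry F β + α) (y := -(cone F v (bdry F α)))
        (by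
          intro s hs
          rcases Finset.mem_union.1 (Finsupp.support_add hs) with h' | h'
          · exact hbβsupp s h'
          · exact hαnotv s h')
        (by
          intro s hs
          rw [Finsupp.support_neg] at hs
          obtain ⟨r, _, hrs⟩ := cone_support F v (bdry F α) s hs
          subst hrs
          exact Finset.mem_insert_self v r)
        (by rw [← hbdryx]; abel)
      have hbα0 : bdry F α = 0 := by
        have h0 := hsplit.2
        rw [neg_eq_zero] at h0
        exact cone_eq_zero F v _ hbαsupp h0
      have hbβ : bdry F β = -α := by
        have h0 := hsplit.1
        exact eq_neg_of_add_eq_zero_left h0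
      -- fill α inside the link of {v}
      obtain ⟨d', rfl⟩ : ∃ d', d = d' + 1 := ⟨d - 1, by omega⟩
      obtain ⟨γ, hγ, hbγ⟩ := h {v} hvK (by simp) d' (by omega) α
        (fun r hr => ⟨(hαlink r hr).1, by rw [(hαlink r hr).2]⟩) hbα0
      have hγK : ∀ r ∈ γ.support, r ∈ K ∧ v ∉ r ∧ insert v r ∈ K := by
        intro r hr
        obtain ⟨hrl, _⟩ := hγ r hr
        rw [linkOf, Finset.mem_filter] at hrl
        obtain ⟨hrK, hrdisj, hrins⟩ := hrl
        rw [Finset.disjoint_singleton_right] at hrdisj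
        refine ⟨hrK, hrdisj, ?_⟩
        rw [Finset.insert_eq, Finset.union_comm] at *
        rwa [← Finset.union_comm] at hrins
      set x' := β + γ with hx'def
      have hbx' : bdry F x' = 0 := by
        rw [hx'def, bdry_add, hbβ, hbγ]
        abel
      have hx'supp : ∀ s ∈ x'.support, s ∈ B ∧ s.card = d' + 1 + 1 := by
        intro s hs
        rcases Finset.mem_union.1 (Finsupp.support_add hs) with h' | h'
        · obtain ⟨hsx, hsv⟩ := hβsupp s h'
          exact ⟨(hBmem s).2 ⟨(hx s hsx).1, hsv⟩, (hx s hsx).2⟩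
        · obtain ⟨hsK, hsv, _⟩ := hγK s h'
          exact ⟨(hBmem s).2 ⟨hsK, hsv⟩, (hγ s h').2⟩
      obtain ⟨y₂, hy₂, hby₂⟩ := ih B hBcard hBK d₀ hBlinks (d' + 1) hd x' hx'supp hbx'
      refine ⟨y₂ - cone F v γ, ?_, ?_⟩
      · intro s hs
        rcases Finset.mem_union.1 (Finsupp.support_sub hs) with h' | h'
        · obtain ⟨hsB, hscard⟩ := hy₂ s h'
          exact ⟨(hBmem s).1 hsB |>.1, hscard⟩
        · obtain ⟨r, hr, hrs⟩ := cone_support F v γ s h'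
          subst hrs
          obtain ⟨hrK, hrv, hrins⟩ := hγK r hr
          refine ⟨hrins, ?_⟩
          rw [Finset.card_insert_of_notMem hrv, (hγ r hr).2]
      · rw [bdry_sub, hby₂, bdry_cone F v γ, hbγ, hx'def]
        · rw [← hsumx, ← hconeα]
          abel
        · intro r hr w hw
          exact lt_of_le_of_ne (hv r (hγK r hr).1 w hw)
            (Ne.symm (fun hwv => (hγK r hr).2.1 (hwv ▸ hw)))

/-- If every link of a non-empty face of `K` has vanishing reduced homology in all
dimensions `≥ d₀`, then `K` itself has vanishing reduced homology in all
dimensions `≥ d₀ + 1`. -/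
theorem vanishing_of_link_vanishing {W : Type} [LinearOrder W] (F : Type) [Field F]
    (K : Finset (Finset W)) (hK : IsComplex K) (d₀ : ℕ)
    (h : ∀ σ ∈ K, σ ≠ ∅ → ∀ d, d₀ ≤ d → VanishesAt F (linkOf K σ) d) :
    ∀ d, d₀ + 1 ≤ d → VanishesAt F K d :=
  main_aux F K.card K le_rfl hK d₀ h
end
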